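/- arXiv:0908.4389 — 6 statements merged into one kernel-verified Lean document; each statement's English description precedes it below -/
import Mathlib

section
/- Let C₁, C₂, η, δ > 0. Then for all K, M, N ≥ 1 with C₁N ≤ M ≤ C₂N, K ≥ N^η, q a positive integer with q ≤ N^{1−δ}, and gcd(q,ρ) = 1, one has ∑_{r ≤ K} ∑_{m ≡ ρr (mod q)} τ_{M,N}(m) ∼ KMN/q as N → ∞, uniformly in M, K, q and ρ; explicitly, for every ε' > 0 there exists N₀ (depending only on ε', C₁, C₂, η, δ) such that for all N ≥ N₀ and all such K, M, q, ρ, the ratio of the left side to KMN/q lies within ε' of 1. -/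
open Finset
open scoped Classical

/-- `tauMN M N m` = τ_{M,N}(m): the number of pairs (a,b) of positive integers
with a ≤ M, b ≤ N and a*b = m. -/
noncomputable def tauMN (M N : ℝ) (m : ℕ) : ℕ :=
  (m.divisors.filter (fun a : ℕ => (a : ℝ) ≤ M ∧ ((m / a : ℕ) : ℝ) ≤ N)).card

/-- `tauLe N n` = τ_N(n): the number of divisors d of n with d ≤ N. -/
noncomputable def tauLe (N : ℝ) (n : ℕ) : ℕ :=
  (n.divisors.filter (fun d : ℕ => (d : ℝ) ≤ N)).card

/-- ‖t‖_q = inf over integers n of |t - q·n|. -/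
noncomputable def qnorm (q : ℕ) (t : ℝ) : ℝ := ⨅ n : ℤ, |t - q * n|

/-- The pair correlation function R₂(x, N, α) for the fractional parts of n²α. -/
noncomputable def R2 (x : ℝ) (N : ℕ) (α : ℝ) : ℝ :=
  (((Finset.Icc 1 N) ×ˢ (Finset.Icc 1 N)).filter
    (fun p => p.1 ≠ p.2 ∧ qnorm 1 ((p.1 : ℝ) ^ 2 * α - (p.2 : ℝ) ^ 2 * α) ≤ x / N)).card / N

/-- The pair correlation of the fractional parts of n²α is Poissonian. -/
def PoissonianPC (α : ℝ) : Prop :=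
  ∀ x : ℝ, 0 < x → Filter.Tendsto (fun N : ℕ => R2 x N α) Filter.atTop (nhds (2 * x))

/-- α is of (Diophantine) type κ: |α − p/q| ≥ c/q^κ for some c > 0 and all p ∈ ℤ, q ∈ ℕ. -/
def IsOfType (α κ : ℝ) : Prop :=
  ∃ c : ℝ, 0 < c ∧ ∀ p : ℤ, ∀ q : ℕ, 0 < q → c / (q : ℝ) ^ κ ≤ |α - (p : ℝ) / (q : ℝ)|

/-- The rational p/q is of type (e, 𝒦): |p/q − u/v| ≥ 1/(𝒦 v^e) for all rationals u/v ≠ p/q. -/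
def RatOfType (p : ℤ) (q : ℕ) (e 𝒦 : ℝ) : Prop :=
  ∀ u : ℤ, ∀ v : ℕ, 0 < v → (u : ℝ) / (v : ℝ) ≠ (p : ℝ) / (q : ℝ) →
    1 / (𝒦 * (v : ℝ) ^ e) ≤ |(p : ℝ) / (q : ℝ) - (u : ℝ) / (v : ℝ)|

/-- The sum ∑_{r ≤ K} ∑_{m : m ≡ ρr (mod q)} τ_{M,N}(m) (over positive integers r ≤ K and
positive integers m; the inner sum is finite since τ_{M,N}(m) = 0 for m > MN). -/
noncomputable def divSumK (M N K : ℝ) (q ρ : ℕ) : ℕ :=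
  ∑ r ∈ Finset.Icc 1 ⌊K⌋₊,
    ∑ m ∈ (Finset.Icc 1 ⌊M * N⌋₊).filter
      (fun m : ℕ => (m : ZMod q) = (ρ : ZMod q) * (r : ZMod q)),
      tauMN M N m

lemma count_residue_class (n r v : ℕ) (hr : 0 < r) :
    |((((Finset.Icc 1 n).filter (fun b => b ≡ v [MOD r])).card : ℝ)) - n / r| ≤ 1 := by
  have hicc : Finset.Icc 1 n = Finset.Ioc 0 n := rfl
  rw [hicc]
  have h := Nat.Ioc_filter_modEq_card 0 n hr v
  have hr' : (0:ℚ) < (r:ℚ) := by positivity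
  set X : ℤ := ⌊((n:ℚ) - v) / (r : ℚ)⌋ with hX
  set Y : ℤ := ⌊((0:ℕ) - (v:ℚ)) / (r : ℚ)⌋ with hY
  have hXY : Y ≤ X := by
    apply Int.floor_le_floor
    gcongr
    · push_cast; linarith [Nat.cast_nonneg (α := ℚ) n]
  rw [max_def] at h
  set c : ℕ := ((Finset.Ioc 0 n).filter (fun b => b ≡ v [MOD r])).card with hc
  have hcard : (c : ℤ) = X - Y := by omega
  have h1 : (X : ℚ) ≤ ((n:ℚ) - v) / r := Int.floor_le _
  have h2 : ((n:ℚ) - v) / r - 1 < X := Int.sub_one_lt_floor _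
  have h3 : (Y : ℚ) ≤ (0 - (v:ℚ)) / r := by rw [hY]; push_cast; exact Int.floor_le _
  have h4 : (0 - (v:ℚ)) / r - 1 < Y := by rw [hY]; push_cast; exact Int.sub_one_lt_floor _
  have heq : ((n:ℚ) - v)/r - (0 - (v:ℚ))/r = n / r := by field_simp; ring
  have hcQ : (c : ℚ) = ((X : ℚ) - Y) := by exact_mod_cast congrArg (fun z : ℤ => (z : ℚ)) hcard
  have key : |(c : ℚ) - n / r| ≤ 1 := by
    rw [hcQ, abs_le]; constructor <;> nlinarith [heq]
  have key2 := (Rat.cast_le (K := ℝ)).mpr key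
  push_cast at key2
  exact key2

lemma no_solution {a q c : ℕ} (hc : ¬ Nat.gcd a q ∣ c) (b : ℕ) : ¬ (a * b ≡ c [MOD q]) := by
  intro h
  apply hc
  have h1 : a * b ≡ c [MOD Nat.gcd a q] := h.of_dvd (Nat.gcd_dvd_right a q)
  have h2 : a * b ≡ 0 [MOD Nat.gcd a q] :=
    (Nat.modEq_zero_iff_dvd).mpr (Dvd.dvd.mul_right (Nat.gcd_dvd_left a q) b)
  exact (Nat.modEq_zero_iff_dvd).mp (h1.symm.trans h2)

lemma exists_solution {a q c : ℕ} (hq : 0 < q) (hc : Nat.gcd a q ∣ c) :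
    ∃ b₀ : ℕ, a * b₀ ≡ c [MOD q] := by
  obtain ⟨t, ht⟩ := hc
  have hbez : (Nat.gcd a q : ℤ) = a * Nat.gcdA a q + q * Nat.gcdB a q := Nat.gcd_eq_gcd_ab a q
  set B : ℤ := Nat.gcdA a q * t with hB
  have hmod : (a : ℤ) * B ≡ (c : ℤ) [ZMOD q] := by
    refine (Int.modEq_iff_dvd.mpr ⟨-(Nat.gcdB a q * t), ?_⟩).symm
    rw [hB]; push_cast [ht]; linear_combination (-(t:ℤ)) * hbez
  set b₀ : ℕ := (B % q).toNat with hb₀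
  have hb₀' : (b₀ : ℤ) = B % q := Int.toNat_of_nonneg (Int.emod_nonneg B (by exact_mod_cast hq.ne'))
  have hBq : ((b₀ : ℤ)) ≡ B [ZMOD q] := by
    rw [hb₀']; exact Int.emod_emod_of_dvd B dvd_rfl
  refine ⟨b₀, ?_⟩
  have : (a : ℤ) * b₀ ≡ c [ZMOD q] := ((hBq.mul_left a).trans hmod)
  rw [← Int.natCast_modEq_iff]
  exact_mod_cast this

lemma sol_iff {a q c b₀ : ℕ} (hq : 0 < q) (h₀ : a * b₀ ≡ c [MOD q]) (b : ℕ) :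
    (a * b ≡ c [MOD q]) ↔ b ≡ b₀ [MOD q / Nat.gcd a q] := by
  constructor
  · intro h
    have : a * b ≡ a * b₀ [MOD q] := h.trans h₀.symm
    have := Nat.ModEq.cancel_left_div_gcd hq this
    rwa [Nat.gcd_comm] at this
  · intro h
    have h1 : a * b ≡ a * b₀ [MOD a * (q / Nat.gcd a q)] := h.mul_left' (c := a)
    have h2 : q ∣ a * (q / Nat.gcd a q) := by
      obtain ⟨a', ha'⟩ := Nat.gcd_dvd_left a q
      refine ⟨a', ?_⟩
      calc a * (q / Nat.gcd a q) = a' * (Nat.gcd a q * (q / Nat.gcd a q)) := by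
            nth_rewrite 1 [ha']; ring
        _ = a' * q := by rw [Nat.mul_div_cancel' (Nat.gcd_dvd_right a q)]
        _ = q * a' := mul_comm _ _
    exact (h1.of_dvd h2).trans h₀

lemma cnt_bound {a q : ℕ} (hq : 0 < q) (n c : ℕ) (hc : Nat.gcd a q ∣ c) :
    |((((Finset.Icc 1 n).filter (fun b => a * b ≡ c [MOD q])).card : ℝ))
      - (n : ℝ) * (Nat.gcd a q) / q| ≤ 1 := by
  obtain ⟨b₀, hb₀⟩ := exists_solution hq hc
  have hfe : ((Finset.Icc 1 n).filter (fun b => a * b ≡ c [MOD q]))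
      = ((Finset.Icc 1 n).filter (fun b => b ≡ b₀ [MOD q / Nat.gcd a q])) := by
    apply Finset.filter_congr
    intro b _
    simpa using sol_iff hq hb₀ b
  have hg : 0 < Nat.gcd a q := Nat.gcd_pos_of_pos_right a hq
  have hq' : 0 < q / Nat.gcd a q := Nat.div_pos (Nat.le_of_dvd hq (Nat.gcd_dvd_right a q)) hg
  have := count_residue_class n (q / Nat.gcd a q) b₀ hq'
  rw [hfe]
  have hcast : ((q / Nat.gcd a q : ℕ) : ℝ) = (q : ℝ) / (Nat.gcd a q : ℝ) :=
    Nat.cast_div (Nat.gcd_dvd_right a q) (by exact_mod_cast hg.ne')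
  have hdiv : (n : ℝ) / ((q / Nat.gcd a q : ℕ) : ℝ) = (n : ℝ) * (Nat.gcd a q) / q := by
    rw [hcast]
    field_simp
  rwa [hdiv] at this

lemma cnt_zero {a q : ℕ} (n c : ℕ) (hc : ¬ Nat.gcd a q ∣ c) :
    ((Finset.Icc 1 n).filter (fun b => a * b ≡ c [MOD q])).card = 0 := by
  rw [Finset.card_eq_zero, Finset.filter_eq_empty_iff]
  intro b _
  exact no_solution hc b

lemma sum_r_bound {a q ρ : ℕ} (hq : 0 < q) (hρ : Nat.gcd q ρ = 1) (n k : ℕ) :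
    |(∑ r ∈ Finset.Icc 1 k,
        ((((Finset.Icc 1 n).filter (fun b => a * b ≡ ρ * r [MOD q])).card : ℝ)))
      - (k : ℝ) * n / q|
      ≤ (k : ℝ) + (n : ℝ) * (Nat.gcd a q) / q := by
  set d := Nat.gcd a q with hd
  have hdpos : 0 < d := Nat.gcd_pos_of_pos_right a hq
  have hdvd_iff : ∀ r : ℕ, d ∣ ρ * r ↔ d ∣ r := by
    intro r
    constructor
    · intro h
      have hcop : Nat.Coprime d ρ := Nat.Coprime.coprime_dvd_left (Nat.gcd_dvd_right a q) hρ
      exact hcop.dvd_of_dvd_mul_left h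
    · intro h; exact h.mul_left ρ
  -- restrict the sum to multiples of d
  have hsplit : ∑ r ∈ Finset.Icc 1 k,
        ((((Finset.Icc 1 n).filter (fun b => a * b ≡ ρ * r [MOD q])).card : ℝ))
      = ∑ r ∈ (Finset.Icc 1 k).filter (fun r => d ∣ r),
        ((((Finset.Icc 1 n).filter (fun b => a * b ≡ ρ * r [MOD q])).card : ℝ)) := by
    rw [Finset.sum_filter_of_ne]
    intro r _ hne
    by_contra hnd
    rw [← hdvd_iff] at hnd
    rw [cnt_zero n (ρ * r) hnd] at hne
    simp at hne
  have hcardF : ((Finset.Icc 1 k).filter (fun r => d ∣ r)).card = k / d := by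
    have : Finset.Icc 1 k = Finset.Ioc 0 k := rfl
    rw [this, Nat.Ioc_filter_dvd_card_eq_div]
  rw [hsplit]
  -- each term is within 1 of n*d/q
  have hterm : ∀ r ∈ (Finset.Icc 1 k).filter (fun r => d ∣ r),
      |((((Finset.Icc 1 n).filter (fun b => a * b ≡ ρ * r [MOD q])).card : ℝ))
        - (n : ℝ) * d / q| ≤ 1 := by
    intro r hr
    rw [Finset.mem_filter] at hr
    exact cnt_bound hq n (ρ * r) ((hdvd_iff r).mpr hr.2)
  have h1 : |(∑ r ∈ (Finset.Icc 1 k).filter (fun r => d ∣ r),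
        ((((Finset.Icc 1 n).filter (fun b => a * b ≡ ρ * r [MOD q])).card : ℝ)))
      - ((k / d : ℕ) : ℝ) * ((n : ℝ) * d / q)| ≤ ((k / d : ℕ) : ℝ) := by
    rw [← hcardF]
    have hsum : ∑ r ∈ (Finset.Icc 1 k).filter (fun r => d ∣ r),
        (((((Finset.Icc 1 n).filter (fun b => a * b ≡ ρ * r [MOD q])).card : ℝ))
          - (n : ℝ) * d / q)
        = (∑ r ∈ (Finset.Icc 1 k).filter (fun r => d ∣ r),
            ((((Finset.Icc 1 n).filter (fun b => a * b ≡ ρ * r [MOD q])).card : ℝ)))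
          - (((Finset.Icc 1 k).filter (fun r => d ∣ r)).card : ℝ) * ((n : ℝ) * d / q) := by
      rw [Finset.sum_sub_distrib, Finset.sum_const, nsmul_eq_mul]
    rw [← hsum]
    · calc |∑ r ∈ (Finset.Icc 1 k).filter (fun r => d ∣ r),
            (((((Finset.Icc 1 n).filter (fun b => a * b ≡ ρ * r [MOD q])).card : ℝ))
              - (n : ℝ) * d / q)|
          ≤ ∑ r ∈ (Finset.Icc 1 k).filter (fun r => d ∣ r),
            |((((Finset.Icc 1 n).filter (fun b => a * b ≡ ρ * r [MOD q])).card : ℝ))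
              - (n : ℝ) * d / q| := Finset.abs_sum_le_sum_abs _ _
        _ ≤ ∑ r ∈ (Finset.Icc 1 k).filter (fun r => d ∣ r), 1 := Finset.sum_le_sum hterm
        _ = (((Finset.Icc 1 k).filter (fun r => d ∣ r)).card : ℝ) := by simp
  -- compare (k/d)*d with k
  have h2 : |((k / d : ℕ) : ℝ) * ((n : ℝ) * d / q) - (k : ℝ) * n / q|
      ≤ (n : ℝ) * d / q := by
    have hle : (k / d) * d ≤ k := Nat.div_mul_le_self k d
    have hgt : k < (k / d) * d + d := by
      have h5 := Nat.div_add_mod k d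
      have h6 := Nat.mod_lt k hdpos
      rw [Nat.mul_comm] at h5
      omega
    have hq0 : (0:ℝ) < q := by exact_mod_cast hq
    have hn0 : (0:ℝ) ≤ n := Nat.cast_nonneg n
    have hleR : ((k / d : ℕ) : ℝ) * (d : ℝ) ≤ (k : ℝ) := by exact_mod_cast hle
    have hgtR : (k : ℝ) < ((k / d : ℕ) : ℝ) * d + d := by exact_mod_cast hgt
    have h3 : |((k / d : ℕ) : ℝ) * d - k| ≤ d := by
      rw [abs_le]
      constructor <;> [linarith; linarith]
    have heq : ((k / d : ℕ) : ℝ) * ((n : ℝ) * d / q) - (k : ℝ) * n / q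
        = (((k / d : ℕ) : ℝ) * d - k) * ((n:ℝ) / q) := by field_simp
    rw [heq, abs_mul, abs_of_nonneg (by positivity : (0:ℝ) ≤ (n:ℝ)/q)]
    calc |((k / d : ℕ) : ℝ) * d - k| * ((n:ℝ)/q) ≤ (d : ℝ) * ((n:ℝ)/q) := by
          apply mul_le_mul_of_nonneg_right h3 (by positivity)
      _ = (n : ℝ) * d / q := by ring
  have hkd : ((k / d : ℕ) : ℝ) ≤ (k : ℝ) := by exact_mod_cast Nat.div_le_self k d
  calc |(∑ r ∈ (Finset.Icc 1 k).filter (fun r => d ∣ r),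
        ((((Finset.Icc 1 n).filter (fun b => a * b ≡ ρ * r [MOD q])).card : ℝ)))
      - (k : ℝ) * n / q|
      ≤ |(∑ r ∈ (Finset.Icc 1 k).filter (fun r => d ∣ r),
        ((((Finset.Icc 1 n).filter (fun b => a * b ≡ ρ * r [MOD q])).card : ℝ)))
      - ((k / d : ℕ) : ℝ) * ((n : ℝ) * d / q)|
      + |((k / d : ℕ) : ℝ) * ((n : ℝ) * d / q) - (k : ℝ) * n / q| := abs_sub_le _ _ _
    _ ≤ ((k / d : ℕ) : ℝ) + (n : ℝ) * d / q := add_le_add h1 h2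
    _ ≤ (k : ℝ) + (n : ℝ) * d / q := by linarith

lemma sum_gcd_le {q : ℕ} (hq : 0 < q) (m : ℕ) :
    ∑ a ∈ Finset.Icc 1 m, Nat.gcd a q ≤ q.divisors.card * m := by
  have hmaps : ∀ a ∈ Finset.Icc 1 m, Nat.gcd a q ∈ q.divisors := by
    intro a _
    exact Nat.mem_divisors.mpr ⟨Nat.gcd_dvd_right a q, hq.ne'⟩
  rw [← Finset.sum_fiberwise_of_maps_to hmaps]
  have hinner : ∀ e ∈ q.divisors,
      ∑ a ∈ (Finset.Icc 1 m).filter (fun a => Nat.gcd a q = e), Nat.gcd a q ≤ m := by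
    intro e he
    have hepos : 0 < e := Nat.pos_of_mem_divisors he
    have hsum : ∑ a ∈ (Finset.Icc 1 m).filter (fun a => Nat.gcd a q = e), Nat.gcd a q
        = ((Finset.Icc 1 m).filter (fun a => Nat.gcd a q = e)).card * e := by
      rw [Finset.sum_congr rfl (fun a ha => (Finset.mem_filter.mp ha).2)]
      simp [Finset.sum_const, Nat.smul_one_eq_cast]
    rw [hsum]
    -- card ≤ m / e via injection a ↦ a / e
    have hcard : ((Finset.Icc 1 m).filter (fun a => Nat.gcd a q = e)).card ≤ m / e := by
      have : ((Finset.Icc 1 m).filter (fun a => Nat.gcd a q = e)).card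
          ≤ (Finset.Icc 1 (m / e)).card := by
        apply Finset.card_le_card_of_injOn (fun a => a / e)
        · intro a ha
          rw [Finset.mem_coe] at ha ⊢
          rw [Finset.mem_filter, Finset.mem_Icc] at ha
          obtain ⟨⟨h1, h2⟩, h3⟩ := ha
          have hea : e ∣ a := h3 ▸ Nat.gcd_dvd_left a q
          rw [Finset.mem_Icc]
          constructor
          · exact Nat.one_le_div_iff hepos |>.mpr (Nat.le_of_dvd h1 hea)
          · exact Nat.div_le_div_right h2
        · intro a ha b hb hab
          rw [Finset.coe_filter] at ha hb
          obtain ⟨-, h3⟩ := ha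
          obtain ⟨-, h4⟩ := hb
          have hea : e ∣ a := h3 ▸ Nat.gcd_dvd_left a q
          have heb : e ∣ b := h4 ▸ Nat.gcd_dvd_left b q
          calc a = e * (a / e) := (Nat.mul_div_cancel' hea).symm
            _ = e * (b / e) := by simp only [] at hab; rw [hab]
            _ = b := Nat.mul_div_cancel' heb
        done
      simpa using this
    calc ((Finset.Icc 1 m).filter (fun a => Nat.gcd a q = e)).card * e ≤ (m / e) * e :=
          Nat.mul_le_mul_right e hcard
      _ ≤ m := Nat.div_mul_le_self m e
  calc ∑ e ∈ q.divisors, ∑ a ∈ (Finset.Icc 1 m).filter (fun a => Nat.gcd a q = e), Nat.gcd a q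
      ≤ ∑ _e ∈ q.divisors, m := Finset.sum_le_sum hinner
    _ = q.divisors.card * m := by rw [Finset.sum_const, smul_eq_mul]

lemma sum_ar_bound {q ρ : ℕ} (hq : 0 < q) (hρ : Nat.gcd q ρ = 1) (m n k : ℕ) :
    |(∑ a ∈ Finset.Icc 1 m, ∑ r ∈ Finset.Icc 1 k,
        ((((Finset.Icc 1 n).filter (fun b => a * b ≡ ρ * r [MOD q])).card : ℝ)))
      - (m : ℝ) * k * n / q|
      ≤ (m : ℝ) * k + ((n : ℝ) / q) * ((q.divisors.card : ℝ) * m) := by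
  have hq0 : (0:ℝ) < q := by exact_mod_cast hq
  have hsum : ∑ a ∈ Finset.Icc 1 m, ((k : ℝ) * n / q) = (m : ℝ) * k * n / q := by
    rw [Finset.sum_const, nsmul_eq_mul, Nat.card_Icc]
    simp; ring
  rw [← hsum, ← Finset.sum_sub_distrib]
  calc |∑ a ∈ Finset.Icc 1 m, ((∑ r ∈ Finset.Icc 1 k,
        ((((Finset.Icc 1 n).filter (fun b => a * b ≡ ρ * r [MOD q])).card : ℝ)))
        - (k : ℝ) * n / q)|
      ≤ ∑ a ∈ Finset.Icc 1 m, |(∑ r ∈ Finset.Icc 1 k,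
        ((((Finset.Icc 1 n).filter (fun b => a * b ≡ ρ * r [MOD q])).card : ℝ)))
        - (k : ℝ) * n / q| := Finset.abs_sum_le_sum_abs _ _
    _ ≤ ∑ a ∈ Finset.Icc 1 m, ((k : ℝ) + (n : ℝ) * (Nat.gcd a q) / q) := by
        apply Finset.sum_le_sum
        intro a _
        exact sum_r_bound hq hρ n k
    _ = (Finset.Icc 1 m).card * (k:ℝ) + ((n:ℝ)/q) * ∑ a ∈ Finset.Icc 1 m, ((Nat.gcd a q : ℝ)) := by
        rw [Finset.sum_add_distrib, Finset.sum_const, nsmul_eq_mul, Finset.mul_sum]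
        congr 1
        apply Finset.sum_congr rfl
        intro a _
        ring
    _ ≤ (m : ℝ) * k + ((n : ℝ) / q) * ((q.divisors.card : ℝ) * m) := by
        have h1 : ((Finset.Icc 1 m).card : ℝ) = m := by rw [Nat.card_Icc]; simp
        have h2 : ∑ a ∈ Finset.Icc 1 m, ((Nat.gcd a q : ℝ)) ≤ (q.divisors.card : ℝ) * m := by
          have := sum_gcd_le hq m
          calc ∑ a ∈ Finset.Icc 1 m, ((Nat.gcd a q : ℝ))
              = ((∑ a ∈ Finset.Icc 1 m, Nat.gcd a q : ℕ) : ℝ) := by push_cast; ring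
            _ ≤ ((q.divisors.card * m : ℕ) : ℝ) := by exact_mod_cast this
            _ = (q.divisors.card : ℝ) * m := by push_cast; ring
        rw [h1]
        have : (0:ℝ) ≤ (n:ℝ)/q := by positivity
        nlinarith [h2, this]

lemma inner_eq (M N : ℝ) (hM : 1 ≤ M) (hN : 1 ≤ N) (q c : ℕ) :
    ∑ m' ∈ (Finset.Icc 1 ⌊M * N⌋₊).filter (fun m' => m' ≡ c [MOD q]), tauMN M N m'
    = ∑ a ∈ Finset.Icc 1 ⌊M⌋₊,
        ((Finset.Icc 1 ⌊N⌋₊).filter (fun b => a * b ≡ c [MOD q])).card := by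
  have hM0 : (0:ℝ) ≤ M := by linarith
  have hN0 : (0:ℝ) ≤ N := by linarith
  simp only [tauMN]
  rw [← Finset.card_sigma, ← Finset.card_sigma]
  apply Finset.card_bij' (fun x _ => (⟨x.2, x.1 / x.2⟩ : Σ _ : ℕ, ℕ))
    (fun y _ => (⟨y.1 * y.2, y.1⟩ : Σ _ : ℕ, ℕ))
  · -- hi : maps into RHS sigma
    intro x hx
    rw [Finset.mem_sigma, Finset.mem_filter, Finset.mem_Icc] at hx
    obtain ⟨⟨⟨hm1, _⟩, hmc⟩, hx2⟩ := hx
    rw [Finset.mem_filter, Nat.mem_divisors] at hx2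
    obtain ⟨⟨hdvd, hne⟩, hMa, hNa⟩ := hx2
    have hapos : 0 < x.2 := Nat.pos_of_dvd_of_pos hdvd hm1
    rw [Finset.mem_sigma, Finset.mem_Icc, Finset.mem_filter, Finset.mem_Icc]
    refine ⟨⟨hapos, Nat.le_floor hMa⟩, ⟨⟨?_, Nat.le_floor hNa⟩, ?_⟩⟩
    · exact Nat.div_pos (Nat.le_of_dvd hm1 hdvd) hapos
    · rwa [Nat.mul_div_cancel' hdvd]
  · -- hj : maps back
    intro y hy
    rw [Finset.mem_sigma, Finset.mem_Icc, Finset.mem_filter, Finset.mem_Icc] at hy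
    obtain ⟨⟨ha1, haM⟩, ⟨hb1, hbN⟩, hcong⟩ := hy
    have haR : ((y.1 : ℝ)) ≤ M := le_trans (by exact_mod_cast Nat.cast_le.mpr haM) (Nat.floor_le hM0)
    have hbR : ((y.2 : ℝ)) ≤ N := le_trans (by exact_mod_cast Nat.cast_le.mpr hbN) (Nat.floor_le hN0)
    rw [Finset.mem_sigma, Finset.mem_filter, Finset.mem_Icc, Finset.mem_filter, Nat.mem_divisors]
    refine ⟨⟨⟨Nat.one_le_iff_ne_zero.mpr (by positivity), ?_⟩, hcong⟩,
      ⟨⟨dvd_mul_right _ _, by positivity⟩, ?_, ?_⟩⟩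
    · apply Nat.le_floor
      push_cast
      exact mul_le_mul haR hbR (Nat.cast_nonneg _) hM0
    · exact haR
    · rwa [Nat.mul_div_cancel_left _ ha1]
  · -- left inverse
    intro x hx
    rw [Finset.mem_sigma] at hx
    obtain ⟨_, hx2⟩ := hx
    rw [Finset.mem_filter, Nat.mem_divisors] at hx2
    obtain ⟨⟨hdvd, _⟩, _⟩ := hx2
    have : x.2 * (x.1 / x.2) = x.1 := Nat.mul_div_cancel' hdvd
    exact Sigma.ext this (by simp)
  · -- right inverse
    intro y hy
    rw [Finset.mem_sigma, Finset.mem_Icc] at hy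
    obtain ⟨⟨ha1, _⟩, _⟩ := hy
    have : y.1 * y.2 / y.1 = y.2 := Nat.mul_div_cancel_left _ ha1
    exact Sigma.ext rfl (by simp [this])

lemma tau_le_rpow {ε : ℝ} (hε : 0 < ε) :
    ∃ C : ℝ, 1 ≤ C ∧ ∀ q : ℕ, 0 < q → (q.divisors.card : ℝ) ≤ C * (q : ℝ) ^ ε := by
  set t : ℝ := (2:ℝ) ^ ε - 1 with ht_def
  have h2ε : (1:ℝ) < (2:ℝ) ^ ε := by
    apply Real.one_lt_rpow_iff_of_pos (by norm_num) |>.mpr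
    exact Or.inl ⟨by norm_num, hε⟩
  have ht : 0 < t := by simp [ht_def]; linarith
  set C₀ : ℝ := max 1 (1/t) with hC₀_def
  have hC₀1 : 1 ≤ C₀ := le_max_left _ _
  have hC₀t : 1 ≤ C₀ * t := by
    calc 1 = (1/t) * t := by field_simp
      _ ≤ C₀ * t := by apply mul_le_mul_of_nonneg_right (le_max_right _ _) ht.le
  have key1 : ∀ s : ℕ, ((s:ℝ) + 1) ≤ C₀ * (2:ℝ) ^ (ε * s) := by
    intro s
    have h1 : (2:ℝ) ^ (ε * s) = ((2:ℝ) ^ ε) ^ s := by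
      rw [Real.rpow_mul (by norm_num), Real.rpow_natCast]
    have h2 : (1 + t) ^ s ≥ 1 + s * t := by
      have := one_add_mul_le_pow (a := t) (by linarith) s
      linarith
    have h3 : (1:ℝ) + t = (2:ℝ)^ε := by simp [ht_def]
    rw [h1, ← h3]
    have hs0 : (0:ℝ) ≤ s := Nat.cast_nonneg s
    nlinarith [h2, hC₀1, hC₀t, hs0]
  set B : ℕ := ⌈(2:ℝ) ^ (1/ε)⌉₊ with hB_def
  refine ⟨C₀ ^ (B + 1), one_le_pow₀ hC₀1, ?_⟩
  intro q hq
  have hq0 : q ≠ 0 := hq.ne'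
  set P := q.primeFactors with hP_def
  -- q^ε as a product
  have hqprod : (q : ℝ) = ∏ p ∈ P, (p : ℝ) ^ (q.factorization p) := by
    conv_lhs => rw [← Nat.factorization_prod_pow_eq_self hq0]
    rw [Nat.prod_factorization_eq_prod_primeFactors]
    push_cast
    rfl
  have hppos : ∀ p ∈ P, (0:ℝ) < p := by
    intro p hp
    exact_mod_cast (Nat.prime_of_mem_primeFactors hp).pos
  have hqeps : (q : ℝ) ^ ε = ∏ p ∈ P, (p : ℝ) ^ (ε * (q.factorization p)) := by
    rw [hqprod, ← Real.finset_prod_rpow P _ (fun p hp => by positivity) ε]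
    apply Finset.prod_congr rfl
    intro p hp
    rw [← Real.rpow_natCast (p:ℝ) (q.factorization p), ← Real.rpow_mul (hppos p hp).le]
    ring_nf
  -- bound each factor
  have hfactor : ∀ p ∈ P, ((q.factorization p : ℝ) + 1)
      ≤ (if (p:ℝ) ^ ε < 2 then C₀ else 1) * (p : ℝ) ^ (ε * (q.factorization p)) := by
    intro p hp
    have hp2 : 2 ≤ p := (Nat.prime_of_mem_primeFactors hp).two_le
    have hp2R : (2:ℝ) ≤ p := by exact_mod_cast hp2
    set s := q.factorization p
    have h2s : (2:ℝ) ^ (ε * s) ≤ (p:ℝ) ^ (ε * s) :=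
      Real.rpow_le_rpow (by norm_num) hp2R (by positivity)
    by_cases hcase : (p:ℝ) ^ ε < 2
    · rw [if_pos hcase]
      calc ((s:ℝ) + 1) ≤ C₀ * (2:ℝ) ^ (ε * s) := key1 s
        _ ≤ C₀ * (p:ℝ) ^ (ε * s) := by
            apply mul_le_mul_of_nonneg_left h2s (by linarith)
    · rw [if_neg hcase, one_mul]
      push_neg at hcase
      calc ((s:ℝ) + 1) ≤ (2:ℝ) ^ (s:ℕ) := by
            exact_mod_cast (Nat.lt_two_pow_self (n := s))
        _ = (2:ℝ) ^ ((s:ℕ):ℝ) := (Real.rpow_natCast 2 s).symm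
        _ ≤ ((p:ℝ) ^ ε) ^ ((s:ℕ):ℝ) :=
            Real.rpow_le_rpow (by norm_num) hcase (Nat.cast_nonneg s)
        _ = (p:ℝ) ^ (ε * (s:ℝ)) := by
            rw [← Real.rpow_mul (le_of_lt (hppos p hp))]
  -- assemble the product
  have hprod : (q.divisors.card : ℝ) ≤ (∏ p ∈ P, (if (p:ℝ) ^ ε < 2 then C₀ else 1))
      * ∏ p ∈ P, (p : ℝ) ^ (ε * (q.factorization p)) := by
    rw [← Finset.prod_mul_distrib]
    rw [Nat.card_divisors hq0]
    push_cast
    apply Finset.prod_le_prod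
    · intro p _; positivity
    · intro p hp; exact hfactor p hp
  have hS : (∏ p ∈ P, (if (p:ℝ) ^ ε < 2 then C₀ else 1)) ≤ C₀ ^ (B + 1) := by
    have heq : (∏ p ∈ P, (if (p:ℝ) ^ ε < 2 then C₀ else 1))
        = ∏ p ∈ P.filter (fun p : ℕ => (p:ℝ) ^ ε < 2), C₀ := by
      rw [Finset.prod_filter]
    rw [heq, Finset.prod_const]
    have hsub : P.filter (fun p : ℕ => (p:ℝ) ^ ε < 2) ⊆ Finset.Iic B := by
      intro p hp
      rw [Finset.mem_filter] at hp
      obtain ⟨hpP, hsmall⟩ := hp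
      have hp0 : (0:ℝ) ≤ p := Nat.cast_nonneg p
      have h1 : ((p:ℝ) ^ ε) ^ (1/ε) < (2:ℝ) ^ (1/ε) :=
        Real.rpow_lt_rpow (by positivity) hsmall (by positivity)
      have h2 : ((p:ℝ) ^ ε) ^ (1/ε) = (p:ℝ) := by
        rw [← Real.rpow_mul hp0]
        rw [mul_one_div, div_self hε.ne', Real.rpow_one]
      have h3 : (2:ℝ) ^ (1/ε) ≤ (B:ℝ) := Nat.le_ceil _
      rw [Finset.mem_Iic]
      exact_mod_cast le_trans (le_of_lt (h2 ▸ h1)) h3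
    calc C₀ ^ (P.filter (fun p : ℕ => (p:ℝ) ^ ε < 2)).card
        ≤ C₀ ^ (Finset.Iic B).card := pow_le_pow_right₀ hC₀1 (Finset.card_le_card hsub)
      _ = C₀ ^ (B + 1) := by rw [Nat.card_Iic]
  calc (q.divisors.card : ℝ)
      ≤ (∏ p ∈ P, (if (p:ℝ) ^ ε < 2 then C₀ else 1))
        * ∏ p ∈ P, (p : ℝ) ^ (ε * (q.factorization p)) := hprod
    _ ≤ C₀ ^ (B + 1) * (q:ℝ) ^ ε := by
        rw [← hqeps] at *
        apply mul_le_mul_of_nonneg_right hS (by positivity)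

set_option maxHeartbeats 1000000 in
/-- Let C₁, C₂, η, δ > 0.  For all K, M, N ≥ 1 with C₁N ≤ M ≤ C₂N, K ≥ N^η,
q ≤ N^{1−δ} and gcd(q,ρ) = 1, one has ∑_{r ≤ K} ∑_{m ≡ ρr (q)} τ_{M,N}(m) ∼ KMN/q
as N → ∞, uniformly in M, K, q, ρ: for every ε' > 0 there is N₀ (depending only on
ε', C₁, C₂, η, δ) such that for all N ≥ N₀ and all such K, M, q, ρ the ratio of the sum
to KMN/q lies within ε' of 1. -/
theorem div_sum_asymptotic_small_q (C₁ C₂ η δ : ℝ)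
    (hC₁ : 0 < C₁) (hC₂ : 0 < C₂) (hη : 0 < η) (hδ : 0 < δ) :
    ∀ ε' : ℝ, 0 < ε' → ∃ N₀ : ℝ, ∀ N K M : ℝ, ∀ q ρ : ℕ,
      N₀ ≤ N → 1 ≤ K → 1 ≤ M → 1 ≤ N → C₁ * N ≤ M → M ≤ C₂ * N → N ^ η ≤ K →
      0 < q → (q : ℝ) ≤ N ^ (1 - δ) → Nat.gcd q ρ = 1 →
      |(divSumK M N K q ρ : ℝ) * q / (K * M * N) - 1| ≤ ε' := by
  intro ε' hε'
  obtain ⟨C, hC1, hC⟩ := tau_le_rpow hη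
  have hC0 : (0:ℝ) < C := lt_of_lt_of_le one_pos hC1
  -- choose N₀ from the decay of the error function
  have hg : Filter.Tendsto
      (fun N : ℝ => N ^ (-δ) + C * N ^ (-(η*δ)) + N⁻¹ + (1/C₁) * N⁻¹ + N ^ (-η))
      Filter.atTop (nhds 0) := by
    have t1 := tendsto_rpow_neg_atTop hδ
    have t2 := (tendsto_rpow_neg_atTop (by positivity : 0 < η*δ)).const_mul C
    have t3 := tendsto_inv_atTop_zero (𝕜 := ℝ)
    have t4 := tendsto_inv_atTop_zero (𝕜 := ℝ) |>.const_mul (1/C₁)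
    have t5 := tendsto_rpow_neg_atTop hη
    have := ((((t1.add t2).add t3).add t4).add t5)
    simpa using this
  have hev : ∀ᶠ N in Filter.atTop,
      (N:ℝ) ^ (-δ) + C * N ^ (-(η*δ)) + N⁻¹ + (1/C₁) * N⁻¹ + N ^ (-η) < ε' :=
    hg.eventually (gt_mem_nhds hε')
  obtain ⟨N₀, hN₀⟩ := Filter.eventually_atTop.mp hev
  refine ⟨N₀, ?_⟩
  intro N K M q ρ hNN₀ hK1 hM1 hN1 hC₁N hC₂N hNηK hqpos hqle hgcd
  set k := ⌊K⌋₊ with hk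
  set mm := ⌊M⌋₊ with hmm
  set n := ⌊N⌋₊ with hn
  have hN0 : (0:ℝ) < N := by linarith
  have hK0 : (0:ℝ) < K := by linarith
  have hM0 : (0:ℝ) < M := by linarith
  have hq0R : (0:ℝ) < q := by exact_mod_cast hqpos
  -- rewrite divSumK
  have hdiv : (divSumK M N K q ρ : ℝ)
      = ∑ a ∈ Finset.Icc 1 mm, ∑ r ∈ Finset.Icc 1 k,
          ((((Finset.Icc 1 n).filter (fun b => a * b ≡ ρ * r [MOD q])).card : ℝ)) := by
    have hstep : divSumK M N K q ρ
        = ∑ r ∈ Finset.Icc 1 k, ∑ a ∈ Finset.Icc 1 mm,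
            ((Finset.Icc 1 n).filter (fun b => a * b ≡ ρ * r [MOD q])).card := by
      unfold divSumK
      apply Finset.sum_congr rfl
      intro r _
      have hfe : (Finset.Icc 1 ⌊M * N⌋₊).filter
            (fun m : ℕ => (m : ZMod q) = (ρ : ZMod q) * (r : ZMod q))
          = (Finset.Icc 1 ⌊M * N⌋₊).filter (fun m : ℕ => m ≡ ρ * r [MOD q]) := by
        apply Finset.filter_congr
        intro m _
        rw [← Nat.cast_mul, ZMod.natCast_eq_natCast_iff]
      rw [hfe]
      exact inner_eq M N hM1 hN1 q (ρ * r)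
    rw [hstep, Finset.sum_comm]
    push_cast
    rfl
  set τR : ℝ := (q.divisors.card : ℝ) with hτR
  have hτR0 : 0 ≤ τR := Nat.cast_nonneg _
  have hmain : |(divSumK M N K q ρ : ℝ) - (mm : ℝ) * k * n / q|
      ≤ (mm : ℝ) * k + ((n : ℝ) / q) * (τR * mm) := by
    rw [hdiv]; exact sum_ar_bound hqpos hgcd mm n k
  -- floor bounds
  have hmmM : (mm : ℝ) ≤ M := Nat.floor_le (le_of_lt hM0)
  have hkK : (k : ℝ) ≤ K := Nat.floor_le (le_of_lt hK0)
  have hnN : (n : ℝ) ≤ N := Nat.floor_le (le_of_lt hN0)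
  have hmmM' : M - 1 ≤ (mm : ℝ) := by
    have := Nat.lt_floor_add_one M; linarith
  have hkK' : K - 1 ≤ (k : ℝ) := by
    have := Nat.lt_floor_add_one K; linarith
  have hnN' : N - 1 ≤ (n : ℝ) := by
    have := Nat.lt_floor_add_one N; linarith
  have hk0 : (0:ℝ) ≤ k := Nat.cast_nonneg _
  have hmm0 : (0:ℝ) ≤ mm := Nat.cast_nonneg _
  have hn0 : (0:ℝ) ≤ n := Nat.cast_nonneg _
  -- product comparison
  have hprodle : (mm : ℝ) * k * n ≤ K * M * N := by
    calc (mm : ℝ) * k * n ≤ M * K * N := by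
          apply mul_le_mul (mul_le_mul hmmM hkK hk0 (le_of_lt hM0)) hnN hn0
          positivity
      _ = K * M * N := by ring
  have hprodge : K * M * N - (mm : ℝ) * k * n ≤ K*M + K*N + M*N := by
    have h1 : (K-1)*(M-1)*(N-1) ≤ (k : ℝ) * mm * n := by
      apply mul_le_mul (mul_le_mul hkK' hmmM' (by linarith) (by linarith)) hnN'
        (by linarith) (by positivity)
    nlinarith [h1]
  -- final rearrangement
  have hfact : (divSumK M N K q ρ : ℝ) * q / (K * M * N) - 1
      = ((divSumK M N K q ρ : ℝ) - K * M * N / q) * (q / (K * M * N)) := by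
    field_simp
  have hEbound : |(divSumK M N K q ρ : ℝ) - K * M * N / q|
      ≤ M * K + ((N : ℝ)/q) * (τR * M) + (K*M + K*N + M*N)/q := by
    have h1 : |(divSumK M N K q ρ : ℝ) - K * M * N / q|
        ≤ |(divSumK M N K q ρ : ℝ) - (mm : ℝ) * k * n / q|
          + |(mm : ℝ) * k * n / q - K * M * N / q| := abs_sub_le _ _ _
    have h2 : |(mm : ℝ) * k * n / q - K * M * N / q| ≤ (K*M + K*N + M*N)/q := by
      rw [abs_sub_comm, abs_of_nonneg (sub_nonneg.mpr (by gcongr)), ← sub_div]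
      gcongr
    have h3 : (mm : ℝ) * k + ((n : ℝ) / q) * (τR * mm)
        ≤ M * K + ((N : ℝ)/q) * (τR * M) := by
      have h5 : (mm:ℝ) * k ≤ M * K := mul_le_mul hmmM hkK hk0 (le_of_lt hM0)
      have h6 : ((n : ℝ) / q) * (τR * mm) ≤ ((N : ℝ)/q) * (τR * M) := by gcongr
      linarith
    linarith [hmain, h1, h2, h3]
  -- pass to the normalized quantity
  have habs : |(divSumK M N K q ρ : ℝ) * q / (K * M * N) - 1|
      = |(divSumK M N K q ρ : ℝ) - K * M * N / q| * (q / (K * M * N)) := by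
    rw [hfact, abs_mul, abs_of_pos (by positivity : (0:ℝ) < q / (K * M * N))]
  have e1 : M * K * ((q:ℝ) / (K*M*N)) = q / N := by field_simp
  have e2 : (((N:ℝ)/q) * (τR*M)) * ((q:ℝ) / (K*M*N)) = τR / K := by field_simp
  have e3 : ((K*M + K*N + M*N)/(q:ℝ)) * ((q:ℝ) / (K*M*N)) = 1/N + 1/M + 1/K := by
    field_simp
  have hE : (M * K + ((N : ℝ)/q) * (τR * M) + (K*M + K*N + M*N)/q) * (q / (K * M * N))
      = q / N + τR / K + (1/N + 1/M + 1/K) := by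
    rw [add_mul, add_mul, e1, e2, e3]
  have hstep2 : |(divSumK M N K q ρ : ℝ) * q / (K * M * N) - 1|
      ≤ q / N + τR / K + (1/N + 1/M + 1/K) := by
    rw [habs, ← hE]
    apply mul_le_mul_of_nonneg_right hEbound (by positivity)
  -- bound each term
  have b1 : (q:ℝ) / N ≤ N ^ (-δ) := by
    have hsplit : N ^ (1 - δ) = N * N ^ (-δ) := by
      rw [show (1 - δ) = 1 + (-δ) by ring, Real.rpow_add hN0, Real.rpow_one]
    calc (q:ℝ) / N ≤ N ^ (1-δ) / N := by gcongr
      _ = N ^ (-δ) := by rw [hsplit]; field_simp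
  have b2 : τR / K ≤ C * N ^ (-(η*δ)) := by
    have hq1 : τR ≤ C * (q:ℝ) ^ η := hC q hqpos
    have hq2 : ((q:ℝ)) ^ η ≤ (N ^ (1-δ)) ^ η :=
      Real.rpow_le_rpow (le_of_lt hq0R) hqle (le_of_lt hη)
    have hq3 : (N ^ (1-δ)) ^ η = N ^ ((1-δ)*η) := (Real.rpow_mul hN0.le _ _).symm
    have hNη : (0:ℝ) < N ^ η := by positivity
    have hup : τR ≤ C * N ^ ((1-δ)*η) := by
      calc τR ≤ C * (q:ℝ) ^ η := hq1
        _ ≤ C * (N ^ (1-δ)) ^ η := by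
            apply mul_le_mul_of_nonneg_left hq2 (le_of_lt hC0)
        _ = C * N ^ ((1-δ)*η) := by rw [hq3]
    calc τR / K ≤ (C * N ^ ((1-δ)*η)) / N ^ η :=
          div_le_div₀ (by positivity) hup hNη hNηK
      _ = C * N ^ (-(η*δ)) := by
          rw [show -(η*δ) = (1-δ)*η - η by ring, Real.rpow_sub hN0]
          ring
  have b4 : 1 / M ≤ (1/C₁) * N⁻¹ := by
    have : 1 / M ≤ 1 / (C₁ * N) := by
      apply one_div_le_one_div_of_le (by positivity) hC₁N
    calc (1:ℝ)/M ≤ 1/(C₁*N) := this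
      _ = (1/C₁) * N⁻¹ := by field_simp
  have b5 : 1 / K ≤ N ^ (-η) := by
    have : 1 / K ≤ 1 / N ^ η := one_div_le_one_div_of_le (by positivity) hNηK
    rwa [Real.rpow_neg hN0.le, ← one_div]
  have hgN := hN₀ N hNN₀
  have b3 : (1:ℝ)/N = N⁻¹ := one_div N
  calc |(divSumK M N K q ρ : ℝ) * q / (K * M * N) - 1|
      ≤ q / N + τR / K + (1/N + 1/M + 1/K) := hstep2
    _ ≤ N ^ (-δ) + C * N ^ (-(η*δ)) + N⁻¹ + (1/C₁) * N⁻¹ + N ^ (-η) := by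
        rw [b3] at *
        linarith [b1, b2, b4, b5]
    _ ≤ ε' := le_of_lt hgN
end

section
/- For every ε > 0 there exists a constant C (depending only on ε) such that for all real N, K ≥ 1 and all positive integers q, | ∑_{r ≤ K} ∑_{d ≤ N, gcd(d,q) ∣ r} gcd(d,q) − KN | ≤ C·(K+N)·q^ε, where the sums run over positive integers r ≤ K and positive integers d ≤ N with gcd(d,q) dividing r. -/
open Finset
open scoped Classical

lemma keyineq {δ : ℝ} (hδ : 0 < δ) (e : ℕ) :
    ((e : ℝ) + 1) ≤ (1 + 1/δ) * Real.exp (δ * e) := by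
  have h1 : δ * e + 1 ≤ Real.exp (δ * e) := by
    have := Real.add_one_le_exp (δ * e); linarith
  have he : (0:ℝ) ≤ e := Nat.cast_nonneg e
  have hinv : (1/δ) * δ = 1 := by field_simp
  nlinarith [mul_nonneg (mul_nonneg (le_of_lt hδ) he) (le_of_lt hδ),
    mul_pos hδ hδ, one_div_pos.mpr hδ]

theorem tauCard_le_rpow (ε : ℝ) (hε : 0 < ε) :
    ∃ C : ℝ, 1 ≤ C ∧ ∀ q : ℕ, q ≠ 0 → ((q.divisors.card : ℝ)) ≤ C * (q:ℝ) ^ ε := by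
  have hδ : 0 < ε * Real.log 2 := mul_pos hε (Real.log_pos one_lt_two)
  set δ := ε * Real.log 2 with hδdef
  set c : ℝ := 1 + 1/δ with hc
  have hc1 : 1 ≤ c := le_add_of_nonneg_right (by positivity)
  set T : ℕ := ⌈(2:ℝ) ^ ((1:ℝ)/ε)⌉₊ with hT
  refine ⟨c ^ T, one_le_pow₀ hc1, ?_⟩
  intro q hq
  rw [Nat.card_divisors hq]
  have hqprod : (q : ℝ) = ∏ p ∈ q.primeFactors, ((p : ℝ) ^ (q.factorization p)) := by
    conv_lhs => rw [← Nat.factorization_prod_pow_eq_self hq]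
    rw [Nat.prod_factorization_eq_prod_primeFactors]
    push_cast
    rfl
  have hnonneg : ∀ p ∈ q.primeFactors, (0:ℝ) ≤ (p : ℝ) ^ (q.factorization p) := by
    intro p _; positivity
  have hqrw : (q : ℝ) ^ ε = ∏ p ∈ q.primeFactors, ((p : ℝ) ^ (q.factorization p)) ^ ε := by
    rw [hqprod, ← Real.finset_prod_rpow _ _ hnonneg]
  rw [hqrw]
  push_cast
  set S := q.primeFactors.filter (fun p : ℕ => ((p:ℝ) < (2:ℝ) ^ ((1:ℝ)/ε))) with hS
  have hfac : ∀ p ∈ q.primeFactors,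
      ((q.factorization p : ℝ) + 1) ≤ (if p ∈ S then c else 1) * ((p : ℝ) ^ (q.factorization p)) ^ ε := by
    intro p hp
    have hp2 : 2 ≤ p := (Nat.prime_of_mem_primeFactors hp).two_le
    set e := q.factorization p with he
    by_cases hmem : p ∈ S
    · simp only [hmem, if_true]
      have hpe : ((p : ℝ) ^ e) ^ ε = (p : ℝ) ^ ((e : ℝ) * ε) := by
        rw [← Real.rpow_natCast (p:ℝ) e, ← Real.rpow_mul (by positivity)]
      rw [hpe]
      have h2 : (2:ℝ) ^ ((e:ℝ) * ε) ≤ (p:ℝ) ^ ((e:ℝ) * ε) :=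
        Real.rpow_le_rpow (by norm_num) (by exact_mod_cast hp2) (by positivity)
      have hkey : ((e : ℝ) + 1) ≤ c * (2:ℝ) ^ ((e:ℝ) * ε) := by
        rw [Real.rpow_def_of_pos (by norm_num : (0:ℝ) < 2), hc,
          show Real.log 2 * ((e:ℝ) * ε) = δ * e by rw [hδdef]; ring]
        exact keyineq hδ e
      exact hkey.trans (mul_le_mul_of_nonneg_left h2 (by linarith))
    · simp only [hmem, if_false, one_mul]
      have hplarge : (2:ℝ) ^ ((1:ℝ)/ε) ≤ (p:ℝ) := by
        by_contra hlt
        exact hmem (Finset.mem_filter.mpr ⟨hp, not_le.mp hlt⟩)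
      have h2le : (2:ℝ) ≤ (p:ℝ) ^ ε := by
        have := Real.rpow_le_rpow (by positivity) hplarge hε.le
        rwa [← Real.rpow_mul (by norm_num), one_div_mul_cancel hε.ne', Real.rpow_one] at this
      have h1 : ((e:ℝ) + 1) ≤ (2:ℝ) ^ e := by
        have := Nat.lt_two_pow_self (n := e)
        exact_mod_cast Nat.succ_le_of_lt this
      calc ((e:ℝ)+1) ≤ (2:ℝ)^e := h1
        _ ≤ ((p:ℝ)^ε)^(e:ℕ) := pow_le_pow_left₀ (by norm_num) h2le e
        _ = ((p:ℝ)^(e:ℕ))^ε := by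
            rw [← Real.rpow_natCast ((p:ℝ)^ε) e, ← Real.rpow_mul (by positivity),
              mul_comm, Real.rpow_mul (by positivity), Real.rpow_natCast]
  have hprodle : (∏ p ∈ q.primeFactors, ((q.factorization p : ℝ) + 1)) ≤
      ∏ p ∈ q.primeFactors, (if p ∈ S then c else 1) * ((p : ℝ) ^ (q.factorization p)) ^ ε :=
    Finset.prod_le_prod (fun p _ => by positivity) hfac
  refine hprodle.trans ?_
  rw [Finset.prod_mul_distrib]
  have hcount : (∏ p ∈ q.primeFactors, (if p ∈ S then c else 1)) = c ^ S.card := by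
    rw [← Finset.prod_filter, Finset.filter_mem_eq_inter,
      Finset.inter_eq_right.mpr (hS ▸ Finset.filter_subset _ _), Finset.prod_const]
  have hScard : S.card ≤ T := by
    have hsub : S ⊆ Finset.Icc 1 T := by
      intro p hp
      obtain ⟨hp1, hp2⟩ := Finset.mem_filter.mp hp
      have : (p:ℝ) ≤ (T:ℕ) := le_trans hp2.le (Nat.le_ceil _)
      have hple : p ≤ T := by exact_mod_cast this
      exact Finset.mem_Icc.mpr ⟨(Nat.prime_of_mem_primeFactors hp1).one_lt.le, hple⟩
    calc S.card ≤ (Finset.Icc 1 T).card := Finset.card_le_card hsub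
      _ = T := by rw [Nat.card_Icc]; omega
  apply mul_le_mul_of_nonneg_right _ (Finset.prod_nonneg (fun p hp => Real.rpow_nonneg (hnonneg p hp) ε))
  rw [hcount]
  exact pow_le_pow_right₀ hc1 hScard

/-- For every ε > 0 there is C (depending only on ε) such that for all real N, K ≥ 1 and
all positive integers q, |∑_{r ≤ K} ∑_{d ≤ N, (d,q)∣r} (d,q) − KN| ≤ C(K+N)q^ε. -/
theorem gcd_sum_asymptotic_one (ε : ℝ) (hε : 0 < ε) :
    ∃ C : ℝ, ∀ N K : ℝ, 1 ≤ N → 1 ≤ K → ∀ q : ℕ, 0 < q →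
      |(∑ r ∈ Finset.Icc 1 ⌊K⌋₊,
          ∑ d ∈ (Finset.Icc 1 ⌊N⌋₊).filter (fun d : ℕ => Nat.gcd d q ∣ r),
            (Nat.gcd d q : ℝ)) - K * N| ≤ C * (K + N) * (q : ℝ) ^ ε := by
  obtain ⟨C₀, hC₀1, hC₀⟩ := tauCard_le_rpow ε hε
  refine ⟨C₀ + 1, ?_⟩
  intro N K hN hK q hq
  set K' := ⌊K⌋₊ with hK'def
  set N' := ⌊N⌋₊ with hN'def
  have hK'1 : 1 ≤ K' := Nat.le_floor (by exact_mod_cast hK)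
  have hN'1 : 1 ≤ N' := Nat.le_floor (by exact_mod_cast hN)
  have hK'le : (K' : ℝ) ≤ K := Nat.floor_le (by linarith)
  have hN'le : (N' : ℝ) ≤ N := Nat.floor_le (by linarith)
  have hKlt : K < K' + 1 := Nat.lt_floor_add_one K
  have hNlt : N < N' + 1 := Nat.lt_floor_add_one N
  have hcard : ∀ (g M : ℕ), ((Finset.Icc 1 M).filter (fun r => g ∣ r)).card = M / g := by
    intro g M
    rw [show Finset.Icc 1 M = Finset.Ioc 0 M from Finset.Icc_add_one_left_eq_Ioc 0 M]
    exact Nat.Ioc_filter_dvd_card_eq_div M g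
  -- swap the order of summation
  have hswap : (∑ r ∈ Finset.Icc 1 K',
      ∑ d ∈ (Finset.Icc 1 N').filter (fun d : ℕ => Nat.gcd d q ∣ r), (Nat.gcd d q : ℝ))
      = ∑ d ∈ Finset.Icc 1 N', (Nat.gcd d q : ℝ) * ((K' / Nat.gcd d q : ℕ) : ℝ) := by
    simp_rw [Finset.sum_filter]
    rw [Finset.sum_comm]
    refine Finset.sum_congr rfl fun d _ => ?_
    rw [← Finset.sum_filter, Finset.sum_const, hcard (Nat.gcd d q) K', nsmul_eq_mul, mul_comm]
  rw [hswap]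
  set A := ∑ d ∈ Finset.Icc 1 N', (Nat.gcd d q : ℝ) * ((K' / Nat.gcd d q : ℕ) : ℝ) with hA
  set G : ℝ := ∑ d ∈ Finset.Icc 1 N', (Nat.gcd d q : ℝ) with hG
  -- per-term bounds
  have hterm : ∀ d ∈ Finset.Icc 1 N',
      ((K':ℝ) - Nat.gcd d q ≤ (Nat.gcd d q : ℝ) * ((K' / Nat.gcd d q : ℕ) : ℝ) ∧
       (Nat.gcd d q : ℝ) * ((K' / Nat.gcd d q : ℕ) : ℝ) ≤ (K' : ℝ)) := by
    intro d _
    have hg : 0 < Nat.gcd d q := Nat.gcd_pos_of_pos_right d hq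
    have hmod := Nat.div_add_mod K' (Nat.gcd d q)
    have hlt : K' % Nat.gcd d q < Nat.gcd d q := Nat.mod_lt _ hg
    constructor
    · have h0 : (K' : ℕ) ≤ (Nat.gcd d q) * (K' / Nat.gcd d q) + Nat.gcd d q := by omega
      have h1 : (K' : ℝ) ≤ (Nat.gcd d q : ℝ) * ((K' / Nat.gcd d q : ℕ) : ℝ) + (Nat.gcd d q : ℝ) := by
        exact_mod_cast h0
      linarith
    · have : (Nat.gcd d q) * (K' / Nat.gcd d q) ≤ K' := by omega
      exact_mod_cast this
  have hub : A ≤ (N' : ℝ) * K' := by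
    rw [hA]
    calc (∑ d ∈ Finset.Icc 1 N', (Nat.gcd d q : ℝ) * ((K' / Nat.gcd d q : ℕ) : ℝ))
        ≤ ∑ _d ∈ Finset.Icc 1 N', (K' : ℝ) := Finset.sum_le_sum (fun d hd => (hterm d hd).2)
      _ = (N' : ℝ) * K' := by rw [Finset.sum_const, nsmul_eq_mul, Nat.card_Icc]; norm_num
  have hlb : (N' : ℝ) * K' - G ≤ A := by
    have : ∑ d ∈ Finset.Icc 1 N', ((K' : ℝ) - (Nat.gcd d q : ℝ)) ≤ A :=
      Finset.sum_le_sum (fun d hd => (hterm d hd).1)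
    rw [Finset.sum_sub_distrib, Finset.sum_const, nsmul_eq_mul, Nat.card_Icc] at this
    simp only [Nat.add_sub_cancel] at this
    linarith [this]
  -- bound on G
  have hGnat : (∑ d ∈ Finset.Icc 1 N', Nat.gcd d q) ≤ q.divisors.card * N' := by
    rw [← Finset.sum_fiberwise_of_maps_to
      (fun d _ => Nat.mem_divisors.mpr ⟨Nat.gcd_dvd_right d q, hq.ne'⟩) (fun d => Nat.gcd d q)]
    calc ∑ y ∈ q.divisors, ∑ d ∈ (Finset.Icc 1 N').filter (fun d => Nat.gcd d q = y), Nat.gcd d q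
        ≤ ∑ _y ∈ q.divisors, N' := by
          apply Finset.sum_le_sum
          intro y hy
          have hsub : (Finset.Icc 1 N').filter (fun d => Nat.gcd d q = y) ⊆
              (Finset.Icc 1 N').filter (fun r => y ∣ r) := by
            intro d hd
            obtain ⟨h1, h2⟩ := Finset.mem_filter.mp hd
            exact Finset.mem_filter.mpr ⟨h1, h2 ▸ Nat.gcd_dvd_left d q⟩
          calc ∑ d ∈ (Finset.Icc 1 N').filter (fun d => Nat.gcd d q = y), Nat.gcd d q
              = ∑ d ∈ (Finset.Icc 1 N').filter (fun d => Nat.gcd d q = y), y :=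
                Finset.sum_congr rfl (fun d hd => (Finset.mem_filter.mp hd).2)
            _ = ((Finset.Icc 1 N').filter (fun d => Nat.gcd d q = y)).card * y := by
                rw [Finset.sum_const, smul_eq_mul]
            _ ≤ (N' / y) * y := by
                have := Finset.card_le_card hsub
                rw [hcard y N'] at this
                exact Nat.mul_le_mul_right _ this
            _ ≤ N' := Nat.div_mul_le_self N' y
      _ = q.divisors.card * N' := by rw [Finset.sum_const, smul_eq_mul]
  have hGle : G ≤ C₀ * (q : ℝ) ^ ε * N := by
    have h1 : G ≤ (q.divisors.card : ℝ) * N' := by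
      calc G = ((∑ d ∈ Finset.Icc 1 N', Nat.gcd d q : ℕ) : ℝ) := by rw [hG]; push_cast; rfl
        _ ≤ ((q.divisors.card * N' : ℕ) : ℝ) := Nat.cast_le.mpr hGnat
        _ = (q.divisors.card : ℝ) * N' := by push_cast; ring
    have h2 : (q.divisors.card : ℝ) * N' ≤ (C₀ * (q:ℝ)^ε) * N := by
      apply mul_le_mul (hC₀ q hq.ne') hN'le (by positivity)
      have : (0:ℝ) < (q:ℝ)^ε := Real.rpow_pos_of_pos (by exact_mod_cast hq) ε
      nlinarith
    linarith
  have hq1 : (1:ℝ) ≤ (q:ℝ) ^ ε := by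
    have hq1' : (1:ℝ) ≤ (q:ℝ) := by exact_mod_cast hq
    calc (1:ℝ) = (1:ℝ) ^ ε := (Real.one_rpow ε).symm
      _ ≤ (q:ℝ) ^ ε := Real.rpow_le_rpow (by norm_num) hq1' hε.le
  have hqpos : (0:ℝ) < (q:ℝ) ^ ε := by linarith
  have hGnn : 0 ≤ G := Finset.sum_nonneg fun d _ => by positivity
  have hd1 : K * (N - N') ≤ K * 1 := mul_le_mul_of_nonneg_left (by linarith) (by linarith)
  have hd2 : (N':ℝ) * (K - K') ≤ (N':ℝ) * 1 := mul_le_mul_of_nonneg_left (by linarith) (by positivity)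
  have hKN : K * N - (N' : ℝ) * K' ≤ K + N := by nlinarith
  have hKNub : (N' : ℝ) * K' ≤ N * K :=
    mul_le_mul hN'le hK'le (by positivity) (by linarith)
  have hx : K + N ≤ (K + N) * (q:ℝ)^ε := le_mul_of_one_le_right (by linarith) hq1
  have hy : C₀ * (q:ℝ)^ε * N ≤ C₀ * (q:ℝ)^ε * (K + N) := by
    have : (0:ℝ) ≤ C₀ * (q:ℝ)^ε := by positivity
    nlinarith
  have hrhs : (0:ℝ) ≤ (C₀ + 1) * (K + N) * (q:ℝ)^ε :=
    mul_nonneg (mul_nonneg (by linarith) (by linarith)) hqpos.le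
  rw [abs_le]
  constructor
  · nlinarith
  · nlinarith
end

section
/- For every ε > 0 there exists a constant C (depending only on ε) such that for all real N, K ≥ 1 and all positive integers q, | ∑_{r ≤ K} ∑_{d ≤ N, gcd(d,q) ∣ r} gcd(d,q)/d − K log N | ≤ C·( K q^ε + q^ε log N ), where the sums run over positive integers r ≤ K and positive integers d ≤ N with gcd(d,q) dividing r. -/
open Finset
open scoped Classical

lemma key_ineq' (ε : ℝ) (hε : 0 < ε) (a : ℕ) :
    Real.log (a + 1) ≤ (a * ε + 3 / ε) * Real.log 2 := by
  set t := Real.sqrt a with ht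
  have ht2 : t ^ 2 = a := Real.sq_sqrt (Nat.cast_nonneg a)
  have ht0 : 0 ≤ t := Real.sqrt_nonneg _
  have h1 : Real.log (a + 1) ≤ 2 * t := by
    have h2 : Real.log (Real.sqrt ((a:ℝ) + 1)) = Real.log ((a:ℝ) + 1) / 2 :=
      Real.log_sqrt (by positivity)
    have h3 : Real.log (Real.sqrt ((a : ℝ) + 1)) ≤ Real.sqrt ((a : ℝ) + 1) - 1 :=
      Real.log_le_sub_one_of_pos (Real.sqrt_pos.mpr (by positivity))
    have h4 : Real.sqrt ((a : ℝ) + 1) ≤ t + 1 := by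
      have h5 : ((a : ℝ) + 1) ≤ (t + 1) ^ 2 := by nlinarith
      have := Real.sqrt_le_sqrt h5
      rwa [Real.sqrt_sq (by linarith)] at this
    linarith
  have hlog2 : (0.6931 : ℝ) ≤ Real.log 2 := by linarith [Real.log_two_gt_d9]
  have hs3 : (1.7 : ℝ) ≤ Real.sqrt 3 := by
    rw [show (1.7 : ℝ) = Real.sqrt (1.7 ^ 2) by rw [Real.sqrt_sq]; norm_num]
    exact Real.sqrt_le_sqrt (by norm_num)
  have hamgm : 2 * Real.sqrt 3 * t ≤ (a : ℝ) * ε + 3 / ε := by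
    have h6 : Real.sqrt ε * Real.sqrt (3 / ε) = Real.sqrt 3 := by
      rw [← Real.sqrt_mul hε.le, mul_div_cancel₀ _ hε.ne']
    have h7 := sq_nonneg (Real.sqrt ε * t - Real.sqrt (3 / ε))
    have h8 : Real.sqrt ε ^ 2 = ε := Real.sq_sqrt hε.le
    have h9 : Real.sqrt (3 / ε) ^ 2 = 3 / ε := Real.sq_sqrt (by positivity)
    nlinarith [ht2]
  have hs30 : (0:ℝ) ≤ Real.sqrt 3 := Real.sqrt_nonneg 3
  have hfin := mul_le_mul_of_nonneg_right hamgm (by linarith : (0:ℝ) ≤ Real.log 2)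
  have h10 : (1:ℝ) ≤ Real.sqrt 3 * Real.log 2 := by nlinarith
  have h11 := mul_le_mul_of_nonneg_left h10 ht0
  nlinarith

lemma harmonic_sum_bounds' (n : ℕ) :
    Real.log (n + 1) ≤ ∑ d ∈ Finset.Icc 1 n, (d:ℝ)⁻¹ ∧
    ∑ d ∈ Finset.Icc 1 n, (d:ℝ)⁻¹ ≤ 1 + Real.log n := by
  have h : ∑ d ∈ Finset.Icc 1 n, (d:ℝ)⁻¹ = (harmonic n : ℝ) := by
    rw [harmonic_eq_sum_Icc]; push_cast; rfl
  rw [h]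
  constructor
  · exact_mod_cast log_add_one_le_harmonic n
  · exact harmonic_le_one_add_log n

lemma swap_lemma' (M n q : ℕ) :
    (∑ r ∈ Finset.Icc 1 M,
        ∑ d ∈ (Finset.Icc 1 n).filter (fun d : ℕ => Nat.gcd d q ∣ r),
          (Nat.gcd d q : ℝ) / (d : ℝ))
    = ∑ d ∈ Finset.Icc 1 n, ((Nat.gcd d q : ℝ) / d) * ((M / Nat.gcd d q : ℕ) : ℝ) := by
  calc (∑ r ∈ Finset.Icc 1 M,
        ∑ d ∈ (Finset.Icc 1 n).filter (fun d : ℕ => Nat.gcd d q ∣ r),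
          (Nat.gcd d q : ℝ) / (d : ℝ))
      = ∑ r ∈ Finset.Icc 1 M, ∑ d ∈ Finset.Icc 1 n,
          if Nat.gcd d q ∣ r then (Nat.gcd d q : ℝ) / d else 0 := by
        exact Finset.sum_congr rfl fun r _ => Finset.sum_filter _ _
    _ = ∑ d ∈ Finset.Icc 1 n, ∑ r ∈ Finset.Icc 1 M,
          if Nat.gcd d q ∣ r then (Nat.gcd d q : ℝ) / d else 0 := Finset.sum_comm
    _ = ∑ d ∈ Finset.Icc 1 n, ((Finset.Icc 1 M).filter (fun r => Nat.gcd d q ∣ r)).card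
          • ((Nat.gcd d q : ℝ) / d) := by
        exact Finset.sum_congr rfl fun d _ => by
          rw [← Finset.sum_filter, Finset.sum_const]
    _ = ∑ d ∈ Finset.Icc 1 n, ((Nat.gcd d q : ℝ) / d) * ((M / Nat.gcd d q : ℕ) : ℝ) := by
        refine Finset.sum_congr rfl fun d _ => ?_
        have : Finset.Icc 1 M = Finset.Ioc 0 M := rfl
        rw [this, Nat.Ioc_filter_dvd_card_eq_div, nsmul_eq_mul, mul_comm]

lemma E_bound' (n q : ℕ) (hq : 0 < q) :
    ∑ d ∈ Finset.Icc 1 n, (Nat.gcd d q : ℝ) / d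
      ≤ (q.divisors.card : ℝ) * ∑ e ∈ Finset.Icc 1 n, (e:ℝ)⁻¹ := by
  have hmaps : ∀ d ∈ Finset.Icc 1 n, Nat.gcd d q ∈ q.divisors := by
    intro d hd
    exact Nat.mem_divisors.mpr ⟨Nat.gcd_dvd_right d q, hq.ne'⟩
  rw [← Finset.sum_fiberwise_of_maps_to hmaps (fun d => (Nat.gcd d q : ℝ) / d),
    ← nsmul_eq_mul, ← Finset.sum_const]
  refine Finset.sum_le_sum fun g hg => ?_
  have hg0 : 0 < g := Nat.pos_of_mem_divisors hg
  set A := (Finset.Icc 1 n).filter (fun d : ℕ => Nat.gcd d q = g) with hA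
  have hdvd : ∀ d ∈ A, g ∣ d ∧ 1 ≤ d ∧ d ≤ n := by
    intro d hd
    obtain ⟨hd1, hd2⟩ := Finset.mem_filter.mp hd
    obtain ⟨h1, h2⟩ := Finset.mem_Icc.mp hd1
    exact ⟨hd2 ▸ Nat.gcd_dvd_left d q, h1, h2⟩
  calc ∑ d ∈ A, (Nat.gcd d q : ℝ) / d
      = ∑ d ∈ A, ((d / g : ℕ) : ℝ)⁻¹ := by
        refine Finset.sum_congr rfl fun d hd => ?_
        obtain ⟨h1, h2, _⟩ := hdvd d hd
        have hgd : Nat.gcd d q = g := (Finset.mem_filter.mp hd).2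
        have hd0 : (0:ℝ) < d := by exact_mod_cast h2
        rw [Nat.cast_div h1 (by exact_mod_cast hg0.ne'), hgd]
        rw [inv_div]
    _ = ∑ e ∈ A.image (· / g), (e:ℝ)⁻¹ := by
        symm
        apply Finset.sum_image
        intro d1 h1 d2 h2 heq
        have e1 := (hdvd d1 h1).1
        have e2 := (hdvd d2 h2).1
        rw [← Nat.div_mul_cancel e1, ← Nat.div_mul_cancel e2, (by exact heq : d1 / g = d2 / g)]
    _ ≤ ∑ e ∈ Finset.Icc 1 n, (e:ℝ)⁻¹ := by
        refine Finset.sum_le_sum_of_subset_of_nonneg ?_ (fun e _ _ => by positivity)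
        intro e he
        obtain ⟨d, hd, rfl⟩ := Finset.mem_image.mp he
        obtain ⟨h1, h2, h3⟩ := hdvd d hd
        refine Finset.mem_Icc.mpr ⟨?_, le_trans (Nat.div_le_self d g) h3⟩
        rw [Nat.one_le_div_iff hg0]
        exact Nat.le_of_dvd h2 h1

lemma tau_bound' (ε : ℝ) (hε : 0 < ε) :
    ∃ Cτ : ℝ, 1 ≤ Cτ ∧ ∀ q : ℕ, 0 < q → ((q.divisors.card : ℝ)) ≤ Cτ * (q : ℝ) ^ ε := by
  set B : ℕ := ⌈(2:ℝ) ^ (1/ε)⌉₊ with hB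
  refine ⟨(2:ℝ) ^ ((3/ε) * B), Real.one_le_rpow (by norm_num) (by positivity), ?_⟩
  intro q hq
  have hq0 : q ≠ 0 := hq.ne'
  -- small-prime factor bound
  have hsmall : ∀ p ∈ q.primeFactors, (p:ℝ) < (2:ℝ) ^ (1/ε) →
      ((q.factorization p + 1 : ℕ) : ℝ) ≤ (2:ℝ) ^ (3/ε) * (p:ℝ) ^ ((q.factorization p : ℝ) * ε) := by
    intro p hp _
    have hp2 : (2:ℝ) ≤ (p:ℝ) := by exact_mod_cast (Nat.prime_of_mem_primeFactors hp).two_le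
    set a := q.factorization p
    have h1 : ((a + 1 : ℕ) : ℝ) ≤ (2:ℝ) ^ ((a:ℝ) * ε + 3/ε) := by
      rw [← Real.exp_log (x := ((a+1:ℕ):ℝ)) (by positivity), Real.rpow_def_of_pos (by norm_num)]
      apply Real.exp_le_exp.mpr
      rw [mul_comm]
      have := key_ineq' ε hε a
      push_cast
      push_cast at this
      linarith
    have h2 : (2:ℝ) ^ ((a:ℝ) * ε) ≤ (p:ℝ) ^ ((a:ℝ) * ε) :=
      Real.rpow_le_rpow (by norm_num) hp2 (by positivity)
    calc ((a + 1 : ℕ) : ℝ) ≤ (2:ℝ) ^ ((a:ℝ) * ε + 3/ε) := h1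
      _ = (2:ℝ) ^ (3/ε) * (2:ℝ) ^ ((a:ℝ) * ε) := by
          rw [← Real.rpow_add (by norm_num)]; ring_nf
      _ ≤ (2:ℝ) ^ (3/ε) * (p:ℝ) ^ ((a:ℝ) * ε) := by
          exact mul_le_mul_of_nonneg_left h2 (by positivity)
  have hlarge : ∀ p ∈ q.primeFactors, ¬ ((p:ℝ) < (2:ℝ) ^ (1/ε)) →
      ((q.factorization p + 1 : ℕ) : ℝ) ≤ (p:ℝ) ^ ((q.factorization p : ℝ) * ε) := by
    intro p hp hnp
    push_neg at hnp
    have hp0 : (0:ℝ) < (p:ℝ) := by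
      exact_mod_cast (Nat.prime_of_mem_primeFactors hp).pos
    have hpe : (2:ℝ) ≤ (p:ℝ) ^ ε := by
      calc (2:ℝ) = ((2:ℝ) ^ (1/ε)) ^ ε := by
            rw [← Real.rpow_mul (by norm_num), one_div, inv_mul_cancel₀ hε.ne', Real.rpow_one]
          _ ≤ (p:ℝ) ^ ε := Real.rpow_le_rpow (by positivity) hnp hε.le
    set a := q.factorization p
    have h1 : ((a + 1 : ℕ) : ℝ) ≤ (2:ℝ) ^ a := by
      exact_mod_cast (Nat.lt_two_pow_self (n := a))
    calc ((a + 1 : ℕ) : ℝ) ≤ (2:ℝ) ^ a := h1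
      _ ≤ ((p:ℝ) ^ ε) ^ a := pow_le_pow_left₀ (by norm_num) hpe a
      _ = (p:ℝ) ^ ((a:ℝ) * ε) := by
          rw [← Real.rpow_natCast ((p:ℝ)^ε) a, ← Real.rpow_mul hp0.le, mul_comm]
  have hqeq : (q:ℝ) ^ ε = ∏ p ∈ q.primeFactors, (p:ℝ) ^ ((q.factorization p : ℝ) * ε) := by
    conv_lhs => rw [← Nat.factorization_prod_pow_eq_self hq0]
    rw [Finsupp.prod, Nat.support_factorization]
    push_cast
    rw [← Real.finset_prod_rpow _ _ (fun p _ => by positivity)]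
    refine Finset.prod_congr rfl fun p hp => ?_
    rw [← Real.rpow_natCast ((p:ℝ)) (q.factorization p), ← Real.rpow_mul (by positivity)]
  rw [Nat.card_divisors hq0]
  set g : ℕ → ℝ := fun p => (p:ℝ) ^ ((q.factorization p : ℝ) * ε) with hg
  have hg0 : ∀ p ∈ q.primeFactors, 0 < g p := fun p hp => by
    have : 0 < p := (Nat.prime_of_mem_primeFactors hp).pos
    positivity
  set S := q.primeFactors.filter (fun p : ℕ => (p:ℝ) < (2:ℝ) ^ (1/ε)) with hS
  set L := q.primeFactors.filter (fun p : ℕ => ¬ ((p:ℝ) < (2:ℝ) ^ (1/ε))) with hL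
  have hsplit : ∀ f : ℕ → ℝ, ∏ p ∈ q.primeFactors, f p = (∏ p ∈ S, f p) * ∏ p ∈ L, f p :=
    fun f => (Finset.prod_filter_mul_prod_filter_not _ _ f).symm
  have hScard : S.card ≤ B := by
    refine le_trans (Finset.card_le_card (fun p hp => ?_)) (le_of_eq (Finset.card_range B))
    · show p ∈ Finset.range B
      rw [Finset.mem_range]
      have hp := (Finset.mem_filter.mp hp).2
      have : (p:ℝ) < (B:ℝ) := lt_of_lt_of_le hp (Nat.le_ceil _)
      exact_mod_cast this
  have hprod_cast : ((q.primeFactors.prod (q.factorization · + 1) : ℕ) : ℝ)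
      = ∏ p ∈ q.primeFactors, ((q.factorization p + 1 : ℕ) : ℝ) := by push_cast; ring
  rw [hprod_cast, hqeq, hsplit (fun p => ((q.factorization p + 1 : ℕ) : ℝ)), hsplit g]
  have hSbound : ∏ p ∈ S, ((q.factorization p + 1 : ℕ) : ℝ)
      ≤ ((2:ℝ) ^ (3/ε)) ^ B * ∏ p ∈ S, g p := by
    calc ∏ p ∈ S, ((q.factorization p + 1 : ℕ) : ℝ)
        ≤ ∏ p ∈ S, ((2:ℝ) ^ (3/ε) * g p) := by
          refine Finset.prod_le_prod (fun p _ => by positivity) (fun p hp => ?_)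
          have hm := Finset.mem_filter.mp hp
          exact hsmall p hm.1 hm.2
      _ = ((2:ℝ) ^ (3/ε)) ^ S.card * ∏ p ∈ S, g p := by
          rw [Finset.prod_mul_distrib, Finset.prod_const]
      _ ≤ ((2:ℝ) ^ (3/ε)) ^ B * ∏ p ∈ S, g p := by
          refine mul_le_mul_of_nonneg_right (pow_le_pow_right₀ ?_ hScard) ?_
          · exact Real.one_le_rpow (by norm_num) (by positivity)
          · exact Finset.prod_nonneg fun p hp => (hg0 p (Finset.mem_filter.mp hp).1).le
  have hLbound : ∏ p ∈ L, ((q.factorization p + 1 : ℕ) : ℝ) ≤ ∏ p ∈ L, g p := by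
    refine Finset.prod_le_prod (fun p _ => by positivity) (fun p hp => ?_)
    have hm := Finset.mem_filter.mp hp
    exact hlarge p hm.1 hm.2
  have hCeq : (2:ℝ) ^ ((3/ε) * B) = ((2:ℝ) ^ (3/ε)) ^ B := by
    rw [← Real.rpow_natCast ((2:ℝ) ^ (3/ε)) B, ← Real.rpow_mul (by norm_num)]
  rw [hCeq]
  have h1 : 0 ≤ ∏ p ∈ S, ((q.factorization p + 1 : ℕ) : ℝ) :=
    Finset.prod_nonneg fun p _ => by positivity
  have h2 : 0 ≤ ∏ p ∈ L, ((q.factorization p + 1 : ℕ) : ℝ) :=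
    Finset.prod_nonneg fun p _ => by positivity
  have h3 : 0 ≤ ∏ p ∈ S, g p := Finset.prod_nonneg fun p hp => (hg0 p (Finset.mem_filter.mp hp).1).le
  calc (∏ p ∈ S, ((q.factorization p + 1 : ℕ) : ℝ)) * ∏ p ∈ L, ((q.factorization p + 1 : ℕ) : ℝ)
      ≤ (((2:ℝ) ^ (3/ε)) ^ B * ∏ p ∈ S, g p) * ∏ p ∈ L, g p := by
        refine mul_le_mul hSbound hLbound h2 (by positivity)
    _ = ((2:ℝ) ^ (3/ε)) ^ B * ((∏ p ∈ S, g p) * ∏ p ∈ L, g p) := by ring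

/-- For every ε > 0 there is C (depending only on ε) such that for all real N, K ≥ 1 and
all positive integers q, |∑_{r ≤ K} ∑_{d ≤ N, (d,q)∣r} (d,q)/d − K log N| ≤ C(Kq^ε + q^ε log N). -/
theorem gcd_sum_asymptotic_two (ε : ℝ) (hε : 0 < ε) :
    ∃ C : ℝ, ∀ N K : ℝ, 1 ≤ N → 1 ≤ K → ∀ q : ℕ, 0 < q →
      |(∑ r ∈ Finset.Icc 1 ⌊K⌋₊,
          ∑ d ∈ (Finset.Icc 1 ⌊N⌋₊).filter (fun d : ℕ => Nat.gcd d q ∣ r),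
            (Nat.gcd d q : ℝ) / (d : ℝ)) - K * Real.log N| ≤
        C * (K * (q : ℝ) ^ ε + (q : ℝ) ^ ε * Real.log N) := by
  obtain ⟨Cτ, hCτ1, hCτ⟩ := tau_bound' ε hε
  refine ⟨Cτ + 2, ?_⟩
  intro N K hN hK q hq
  set n := ⌊N⌋₊ with hn
  set M := ⌊K⌋₊ with hM
  have hn1 : 1 ≤ n := Nat.le_floor (by exact_mod_cast hN)
  have hM1 : 1 ≤ M := Nat.le_floor (by exact_mod_cast hK)
  set Hn := ∑ d ∈ Finset.Icc 1 n, (d:ℝ)⁻¹ with hHn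
  set L := Real.log N with hLdef
  have hL0 : 0 ≤ L := Real.log_nonneg hN
  have hHb := harmonic_sum_bounds' n
  have hNn1 : N ≤ (n:ℝ) + 1 := (Nat.lt_floor_add_one N).le
  have hnN : (n:ℝ) ≤ N := Nat.floor_le (by linarith)
  have hHlow : L ≤ Hn := by
    refine le_trans ?_ hHb.1
    have h0 : (0:ℝ) < N := by linarith
    exact Real.log_le_log h0 hNn1
  have hHhigh : Hn ≤ 1 + L := by
    refine le_trans hHb.2 ?_
    have h0 : (0:ℝ) < n := by exact_mod_cast hn1
    have := Real.log_le_log h0 hnN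
    linarith
  -- the central sum estimate
  set E := ∑ d ∈ Finset.Icc 1 n, (Nat.gcd d q : ℝ) / d with hE
  have habs1 : |(∑ d ∈ Finset.Icc 1 n, ((Nat.gcd d q : ℝ) / d) * ((M / Nat.gcd d q : ℕ) : ℝ))
      - (M:ℝ) * Hn| ≤ E := by
    have hrw : (∑ d ∈ Finset.Icc 1 n, ((Nat.gcd d q : ℝ) / d) * ((M / Nat.gcd d q : ℕ) : ℝ))
        - (M:ℝ) * Hn
        = ∑ d ∈ Finset.Icc 1 n,
            (((Nat.gcd d q : ℝ) / d) * ((M / Nat.gcd d q : ℕ) : ℝ) - (M:ℝ) * (d:ℝ)⁻¹) := by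
      rw [Finset.sum_sub_distrib, Finset.mul_sum]
    rw [hrw]
    refine le_trans (Finset.abs_sum_le_sum_abs _ _) (Finset.sum_le_sum fun d hd => ?_)
    obtain ⟨hd1, hd2⟩ := Finset.mem_Icc.mp hd
    have hd0 : (0:ℝ) < d := by exact_mod_cast hd1
    have hg0 : 0 < Nat.gcd d q := Nat.gcd_pos_of_pos_right d hq
    set g := Nat.gcd d q with hgdef
    set x := ((M / g : ℕ) : ℝ) with hx
    have e1 : (g:ℝ) * x ≤ M := by
      have := Nat.div_mul_le_self M g
      have : ((M / g * g : ℕ) : ℝ) ≤ (M:ℝ) := by exact_mod_cast this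
      push_cast at this
      nlinarith
    have e2 : (M:ℝ) < (g:ℝ) * x + g := by
      have h := (Nat.div_lt_iff_lt_mul hg0).mp (Nat.lt_succ_self (M / g))
      have : (M:ℝ) < ((M / g + 1) * g : ℕ) := by exact_mod_cast h
      push_cast at this
      nlinarith
    have hdinv : (0:ℝ) < (d:ℝ)⁻¹ := by positivity
    have f1 := mul_le_mul_of_nonneg_right e1 hdinv.le
    have f2 := mul_le_mul_of_nonneg_right e2.le hdinv.le
    rw [abs_le, div_eq_mul_inv]
    constructor <;> linarith [f1, f2]
  have hEb : E ≤ Cτ * (q:ℝ) ^ ε * (1 + L) := by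
    calc E ≤ (q.divisors.card : ℝ) * Hn := E_bound' n q hq
      _ ≤ (Cτ * (q:ℝ) ^ ε) * (1 + L) := by
          exact mul_le_mul (hCτ q hq) hHhigh (le_trans hL0 hHlow) (by positivity)
      _ = Cτ * (q:ℝ) ^ ε * (1 + L) := by ring
  rw [swap_lemma' M n q]
  have hqe : 1 ≤ (q:ℝ) ^ ε := Real.one_le_rpow (by exact_mod_cast hq) hε.le
  have hMK : (M:ℝ) ≤ K := Nat.floor_le (by linarith)
  have hKM : K < (M:ℝ) + 1 := Nat.lt_floor_add_one K
  have hmid : |(M:ℝ) * Hn - K * L| ≤ K + L := by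
    have : (M:ℝ) * Hn - K * L = (M:ℝ) * (Hn - L) + ((M:ℝ) - K) * L := by ring
    rw [this]
    have hM0 : (0:ℝ) ≤ M := by positivity
    calc |(M:ℝ) * (Hn - L) + ((M:ℝ) - K) * L|
        ≤ |(M:ℝ) * (Hn - L)| + |((M:ℝ) - K) * L| := abs_add_le _ _
      _ ≤ (M:ℝ) * 1 + 1 * L := by
          rw [abs_mul, abs_mul]
          refine add_le_add (mul_le_mul_of_nonneg_left ?_ ?_ |>.trans_eq (by rw [abs_of_nonneg hM0])) ?_
          · rw [abs_le]; constructor <;> linarith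
          · exact abs_nonneg _
          · rw [abs_of_nonneg hL0]
            refine mul_le_mul_of_nonneg_right ?_ hL0
            rw [abs_le]; constructor <;> linarith
      _ ≤ K + L := by linarith
  calc |(∑ d ∈ Finset.Icc 1 n, ((Nat.gcd d q : ℝ) / d) * ((M / Nat.gcd d q : ℕ) : ℝ)) - K * L|
      ≤ |(∑ d ∈ Finset.Icc 1 n, ((Nat.gcd d q : ℝ) / d) * ((M / Nat.gcd d q : ℕ) : ℝ))
          - (M:ℝ) * Hn| + |(M:ℝ) * Hn - K * L| := abs_sub_le _ _ _
    _ ≤ E + (K + L) := add_le_add habs1 hmid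
    _ ≤ Cτ * (q:ℝ) ^ ε * (1 + L) + (K + L) := by linarith
    _ ≤ (Cτ + 2) * (K * (q:ℝ) ^ ε + (q:ℝ) ^ ε * L) := by
        have hQ0 : (0:ℝ) ≤ (q:ℝ) ^ ε := by positivity
        have h1 : Cτ * (q:ℝ) ^ ε ≤ Cτ * (q:ℝ) ^ ε * K :=
          le_mul_of_one_le_right (by positivity) hK
        have h2 : K ≤ K * (q:ℝ) ^ ε := le_mul_of_one_le_right (by linarith) hqe
        have h3 : L ≤ (q:ℝ) ^ ε * L := le_mul_of_one_le_left hL0 hqe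
        have h4 : (0:ℝ) ≤ K * (q:ℝ) ^ ε := by positivity
        have h5 : (0:ℝ) ≤ (q:ℝ) ^ ε * L := mul_nonneg hQ0 hL0
        nlinarith [mul_le_mul_of_nonneg_left h2 (by linarith : (0:ℝ) ≤ Cτ)]
end

section
/- For every ε > 0 there exists a constant C (depending only on ε) such that for all real N, K ≥ 1 and all positive integers q, | ∑_{r ≤ K} r ∑_{d ≤ N, gcd(d,q) ∣ r} gcd(d,q) − NK²/2 | ≤ C·K(K+N)·q^ε, where the sums run over positive integers r ≤ K and positive integers d ≤ N with gcd(d,q) dividing r. -/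
open Finset
open scoped Classical

lemma aux_kp1 (t : ℝ) (ht : 0 < t) (k : ℕ) :
    (k : ℝ) + 1 ≤ max 1 (1/t) * Real.exp (k * t) := by
  rcases le_or_gt 1 t with h | h
  · have h1 : (k:ℝ) + 1 ≤ Real.exp ((k:ℝ)*t) := by
      have h2 := Real.add_one_le_exp ((k:ℝ)*t)
      have : (k:ℝ) ≤ (k:ℝ)*t := le_mul_of_one_le_right (Nat.cast_nonneg k) h
      linarith
    calc (k:ℝ) + 1 ≤ Real.exp ((k:ℝ)*t) := h1
      _ ≤ max 1 (1/t) * Real.exp ((k:ℝ)*t) :=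
        le_mul_of_one_le_left (Real.exp_pos _).le (le_max_left _ _)
  · have h1 : 1 + (k:ℝ)*t ≤ Real.exp ((k:ℝ)*t) := by
      have := Real.add_one_le_exp ((k:ℝ)*t); linarith
    have h2 : (1:ℝ)/t ≤ max 1 (1/t) := le_max_right _ _
    have ht' : (0:ℝ) < 1/t := by positivity
    have hk : (0:ℝ) ≤ (k:ℝ)*t := by positivity
    calc (k:ℝ) + 1 ≤ (1/t) * (1 + (k:ℝ)*t) := by
          have h3 : (1/t) * ((k:ℝ)*t) = k := by field_simp
          have : 1 ≤ 1/t := by rw [le_div_iff₀ ht]; linarith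
          nlinarith [this, h3]
      _ ≤ max 1 (1/t) * Real.exp ((k:ℝ)*t) := by
          apply mul_le_mul h2 h1 (by linarith) (le_trans ht'.le h2)


lemma divisor_bound (ε : ℝ) (hε : 0 < ε) :
    ∃ C : ℝ, 1 ≤ C ∧ ∀ q : ℕ, 0 < q → (q.divisors.card : ℝ) ≤ C * (q:ℝ) ^ ε := by
  have hlog2 : (0:ℝ) < Real.log 2 := Real.log_pos (by norm_num)
  set t : ℝ := ε * Real.log 2 with ht_def
  have ht : 0 < t := by positivity
  set Cε : ℝ := max 1 (1/t) with hCε_def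
  have hCε : 1 ≤ Cε := le_max_left _ _
  set B : ℕ := ⌊(2:ℝ)^(1/ε)⌋₊ + 1 with hB_def
  refine ⟨Cε ^ B, one_le_pow₀ hCε, fun q hq => ?_⟩
  have hq0 : q ≠ 0 := hq.ne'
  -- card of divisors as product over prime factors
  have hcard : q.divisors.card = ∏ p ∈ q.primeFactors, (q.factorization p + 1) := by
    rw [Nat.card_divisors hq0]
  -- the per-prime bound
  have key : ∀ p ∈ q.primeFactors,
      ((q.factorization p : ℝ) + 1) ≤
        (if (p:ℝ) ≤ (2:ℝ)^(1/ε) then Cε else 1) * ((p:ℝ) ^ (q.factorization p : ℕ) : ℝ) ^ ε := by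
    intro p hp
    have hp2 : 2 ≤ p := (Nat.prime_of_mem_primeFactors hp).two_le
    have hp2R : (2:ℝ) ≤ (p:ℝ) := by exact_mod_cast hp2
    have hp0 : (0:ℝ) < p := by positivity
    set k : ℕ := q.factorization p with hk
    have hrw : (((p:ℝ) ^ k) : ℝ) ^ ε = ((p:ℝ) ^ ε) ^ k := by
      rw [← Real.rpow_natCast ((p:ℝ)) k, ← Real.rpow_natCast ((p:ℝ)^ε) k,
        ← Real.rpow_mul hp0.le, ← Real.rpow_mul hp0.le, mul_comm]
    split_ifs with hsmall
    · -- small prime: use k+1 ≤ Cε * exp(k t) = Cε * 2^(kε) ≤ Cε * p^(kε)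
      have h1 : (k:ℝ) + 1 ≤ Cε * Real.exp (k * t) := aux_kp1 t ht k
      have h2 : Real.exp ((k:ℝ) * t) = ((2:ℝ) ^ ε) ^ k := by
        rw [← Real.rpow_natCast ((2:ℝ)^ε) k, ← Real.rpow_mul (by norm_num : (0:ℝ) ≤ 2)]
        rw [Real.rpow_def_of_pos (by norm_num : (0:ℝ) < 2)]
        ring_nf
        rw [ht_def]; ring_nf
      have h3 : ((2:ℝ)^ε)^k ≤ ((p:ℝ)^ε)^k := by
        apply pow_le_pow_left₀ (Real.rpow_nonneg (by norm_num) _)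
        exact Real.rpow_le_rpow (by norm_num) hp2R hε.le
      rw [hrw]
      calc (k:ℝ) + 1 ≤ Cε * Real.exp (k*t) := h1
        _ = Cε * ((2:ℝ)^ε)^k := by rw [h2]
        _ ≤ Cε * ((p:ℝ)^ε)^k := by
            apply mul_le_mul_of_nonneg_left h3 (by linarith)
    · -- large prime: p^ε ≥ 2, so p^(kε) ≥ 2^k ≥ k+1
      push_neg at hsmall
      have h2 : (2:ℝ) ≤ (p:ℝ)^ε := by
        have := Real.rpow_le_rpow (by positivity) hsmall.le hε.le
        rwa [← Real.rpow_mul (by norm_num : (0:ℝ) ≤ 2), one_div_mul_cancel hε.ne',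
          Real.rpow_one] at this
      have h3 : ((k:ℝ) + 1) ≤ (2:ℝ)^k := by
        have := Nat.lt_two_pow_self (n := k)
        have : (k:ℝ) + 1 ≤ ((2:ℕ)^k : ℕ) := by exact_mod_cast this
        simpa using this
      rw [hrw, one_mul]
      calc (k:ℝ) + 1 ≤ (2:ℝ)^k := h3
        _ ≤ ((p:ℝ)^ε)^k := pow_le_pow_left₀ (by norm_num) h2 k
  -- combine
  have hprod : ((q.divisors.card : ℝ)) ≤
      (∏ p ∈ q.primeFactors, (if (p:ℝ) ≤ (2:ℝ)^(1/ε) then Cε else 1)) *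
      (∏ p ∈ q.primeFactors, (((p:ℝ) ^ (q.factorization p : ℕ)) ^ ε)) := by
    rw [hcard, ← Finset.prod_mul_distrib]
    push_cast
    apply Finset.prod_le_prod
    · intro p _; positivity
    · exact key
  have hq_eq : (∏ p ∈ q.primeFactors, (((p:ℝ) ^ (q.factorization p : ℕ)) ^ ε)) = (q:ℝ) ^ ε := by
    rw [Real.finset_prod_rpow _ _ (fun p _ => by positivity) ε]
    congr 1
    have h1 : ∏ i ∈ q.primeFactors, ((i:ℝ)) ^ q.factorization i
        = ((∏ i ∈ q.primeFactors, i ^ q.factorization i : ℕ) : ℝ) := by push_cast; rfl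
    rw [h1]
    congr 1
    rw [← Nat.prod_factorization_eq_prod_primeFactors (f := fun p k => p ^ k)]
    exact Nat.factorization_prod_pow_eq_self hq0
  have hsmallprod : (∏ p ∈ q.primeFactors, (if (p:ℝ) ≤ (2:ℝ)^(1/ε) then Cε else 1)) ≤ Cε ^ B := by
    rw [Finset.prod_ite, Finset.prod_const, Finset.prod_const, one_pow, mul_one]
    apply pow_le_pow_right₀ hCε
    refine le_trans (Finset.card_le_card ?_) (le_of_eq (Finset.card_range B))
    intro p hp
    simp only [Finset.mem_filter] at hp
    rw [Finset.mem_range, hB_def, Nat.lt_succ_iff]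
    exact Nat.le_floor hp.2
  calc ((q.divisors.card : ℝ)) ≤ _ := hprod
    _ ≤ Cε ^ B * (q:ℝ)^ε := by
        rw [hq_eq]
        apply mul_le_mul_of_nonneg_right hsmallprod (Real.rpow_nonneg (Nat.cast_nonneg q) ε)


lemma filter_dvd_eq_image (e m : ℕ) (he : 0 < e) :
    (Finset.Icc 1 m).filter (fun r => e ∣ r) = (Finset.Icc 1 (m / e)).image (fun s => e * s) := by
  ext r
  simp only [Finset.mem_filter, Finset.mem_Icc, Finset.mem_image]
  constructor
  · rintro ⟨⟨h1, h2⟩, s, rfl⟩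
    exact ⟨s, ⟨Nat.one_le_iff_ne_zero.2 (by rintro rfl; simp at h1),
      (Nat.le_div_iff_mul_le he).2 (by rwa [Nat.mul_comm] at h2)⟩, rfl⟩
  · rintro ⟨s, ⟨h1, h2⟩, rfl⟩
    refine ⟨⟨Nat.mul_pos he h1, ?_⟩, ⟨s, rfl⟩⟩
    calc e * s ≤ e * (m / e) := Nat.mul_le_mul_left e h2
      _ ≤ m := Nat.mul_div_le m e

lemma sum_multiples (e m : ℕ) (he : 0 < e) :
    ∑ r ∈ (Finset.Icc 1 m).filter (fun r => e ∣ r), (r:ℝ)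
      = (e:ℝ) * ∑ s ∈ Finset.Icc 1 (m / e), (s:ℝ) := by
  rw [filter_dvd_eq_image e m he, Finset.sum_image (by intro a _ b _ h; exact Nat.eq_of_mul_eq_mul_left he h)]
  rw [Finset.mul_sum]
  push_cast
  ring

lemma sum_Icc_id (M : ℕ) : ∑ s ∈ Finset.Icc 1 M, (s:ℝ) = M * (M + 1) / 2 := by
  induction M with
  | zero => simp
  | succ n ih =>
    rw [Finset.sum_Icc_succ_top (by omega), ih]
    push_cast
    ring

-- Lemma B
lemma keyB (e : ℕ) (he : 0 < e) (K : ℝ) (hK : 1 ≤ K) :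
    |(e:ℝ) * (∑ r ∈ (Finset.Icc 1 ⌊K⌋₊).filter (fun r => e ∣ r), (r:ℝ)) - K^2/2| ≤ e * K := by
  set m := ⌊K⌋₊ with hm
  set M := m / e with hM
  rw [sum_multiples e m he, sum_Icc_id, ← hM]
  have hMK : (e:ℝ) * M ≤ K := by
    have h1 : e * M ≤ m := by rw [mul_comm]; exact Nat.div_mul_le_self m e
    calc (e:ℝ) * M = ((e * M : ℕ) : ℝ) := by push_cast; ring
      _ ≤ (m:ℝ) := by exact_mod_cast h1
      _ ≤ K := Nat.floor_le (by linarith)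
  have hKM : K < (e:ℝ) * (M + 1) := by
    have h1 : m < e * M + e := by
      have hd := Nat.div_add_mod m e
      rw [← hM] at hd
      have hmod := Nat.mod_lt m he
      omega
    have h2 : K < (m:ℝ) + 1 := Nat.lt_floor_add_one K
    have h3 : ((m:ℝ)) + 1 ≤ (e:ℝ) * M + e := by exact_mod_cast Nat.succ_le_of_lt h1
    nlinarith
  have he1 : (1:ℝ) ≤ e := by exact_mod_cast he
  have hM0 : (0:ℝ) ≤ M := Nat.cast_nonneg M
  rw [abs_le]
  rcases Nat.eq_zero_or_pos M with h | h
  · have hKe : K < (e:ℝ) := by rw [h] at hKM; simpa using hKM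
    rw [h]
    push_cast
    have hp := mul_lt_mul_of_pos_right hKe (show (0:ℝ) < K by linarith)
    constructor <;> nlinarith [hp, hK, he1]
  · have hM1 : (1:ℝ) ≤ M := by exact_mod_cast h
    have heK : (e:ℝ) ≤ K := by nlinarith
    constructor <;> nlinarith [mul_pos (lt_of_lt_of_le zero_lt_one he1) (lt_of_lt_of_le zero_lt_one hM1)]

lemma gcd_sum_le (q n : ℕ) (hq : 0 < q) :
    (∑ d ∈ Finset.Icc 1 n, (Nat.gcd d q : ℝ)) ≤ (q.divisors.card : ℝ) * n := by
  have hmaps : ∀ d ∈ Finset.Icc 1 n, Nat.gcd d q ∈ q.divisors := by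
    intro d _
    exact Nat.mem_divisors.2 ⟨Nat.gcd_dvd_right d q, hq.ne'⟩
  rw [← Finset.sum_fiberwise_of_maps_to hmaps (fun d => (Nat.gcd d q : ℝ))]
  have hinner : ∀ e ∈ q.divisors,
      (∑ d ∈ (Finset.Icc 1 n).filter (fun d => Nat.gcd d q = e), (Nat.gcd d q : ℝ)) ≤ n := by
    intro e he
    have he0 : 0 < e := Nat.pos_of_mem_divisors he
    have hsub : (Finset.Icc 1 n).filter (fun d => Nat.gcd d q = e)
        ⊆ (Finset.Icc 1 n).filter (fun d => e ∣ d) := by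
      intro d hd
      simp only [Finset.mem_filter] at hd ⊢
      exact ⟨hd.1, hd.2 ▸ Nat.gcd_dvd_left d q⟩
    have hcard : ((Finset.Icc 1 n).filter (fun d => e ∣ d)).card = n / e := by
      rw [filter_dvd_eq_image e n he0,
        Finset.card_image_of_injective _ (fun a b h => Nat.eq_of_mul_eq_mul_left he0 h),
        Nat.card_Icc]
      simp
    calc (∑ d ∈ (Finset.Icc 1 n).filter (fun d => Nat.gcd d q = e), (Nat.gcd d q : ℝ))
        = ∑ d ∈ (Finset.Icc 1 n).filter (fun d => Nat.gcd d q = e), (e:ℝ) := by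
          apply Finset.sum_congr rfl
          intro d hd
          simp only [Finset.mem_filter] at hd
          rw [hd.2]
      _ = ((Finset.Icc 1 n).filter (fun d => Nat.gcd d q = e)).card * (e:ℝ) := by
          rw [Finset.sum_const, nsmul_eq_mul]
      _ ≤ ((n / e : ℕ) : ℝ) * (e:ℝ) := by
          apply mul_le_mul_of_nonneg_right _ (Nat.cast_nonneg e)
          exact_mod_cast (Finset.card_le_card hsub).trans hcard.le
      _ ≤ n := by
          have : (n / e) * e ≤ n := Nat.div_mul_le_self n e
          exact_mod_cast this
  calc (∑ e ∈ q.divisors, ∑ d ∈ (Finset.Icc 1 n).filter (fun d => Nat.gcd d q = e), (Nat.gcd d q : ℝ))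
      ≤ ∑ e ∈ q.divisors, (n:ℝ) := Finset.sum_le_sum hinner
    _ = (q.divisors.card : ℝ) * n := by rw [Finset.sum_const, nsmul_eq_mul]

/-- For every ε > 0 there is C (depending only on ε) such that for all real N, K ≥ 1 and
all positive integers q, |∑_{r ≤ K} r ∑_{d ≤ N, (d,q)∣r} (d,q) − NK²/2| ≤ CK(K+N)q^ε. -/
theorem gcd_sum_asymptotic_three (ε : ℝ) (hε : 0 < ε) :
    ∃ C : ℝ, ∀ N K : ℝ, 1 ≤ N → 1 ≤ K → ∀ q : ℕ, 0 < q →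
      |(∑ r ∈ Finset.Icc 1 ⌊K⌋₊, (r : ℝ) *
          ∑ d ∈ (Finset.Icc 1 ⌊N⌋₊).filter (fun d : ℕ => Nat.gcd d q ∣ r),
            (Nat.gcd d q : ℝ)) - N * K ^ 2 / 2| ≤ C * K * (K + N) * (q : ℝ) ^ ε := by
  obtain ⟨Cd, hCd1, hCd⟩ := divisor_bound ε hε
  refine ⟨Cd, fun N K hN hK q hq => ?_⟩
  set m := ⌊K⌋₊ with hm
  set n := ⌊N⌋₊ with hn
  -- swap the sums
  have hswap : (∑ r ∈ Finset.Icc 1 m, (r : ℝ) *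
      ∑ d ∈ (Finset.Icc 1 n).filter (fun d : ℕ => Nat.gcd d q ∣ r), (Nat.gcd d q : ℝ))
      = ∑ d ∈ Finset.Icc 1 n, (Nat.gcd d q : ℝ) *
          ∑ r ∈ (Finset.Icc 1 m).filter (fun r => Nat.gcd d q ∣ r), (r:ℝ) := by
    calc (∑ r ∈ Finset.Icc 1 m, (r : ℝ) *
        ∑ d ∈ (Finset.Icc 1 n).filter (fun d : ℕ => Nat.gcd d q ∣ r), (Nat.gcd d q : ℝ))
        = ∑ r ∈ Finset.Icc 1 m, ∑ d ∈ Finset.Icc 1 n,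
            (if Nat.gcd d q ∣ r then (r:ℝ) * (Nat.gcd d q : ℝ) else 0) := by
          refine Finset.sum_congr rfl fun r _ => ?_
          rw [Finset.mul_sum, Finset.sum_filter]
      _ = ∑ d ∈ Finset.Icc 1 n, ∑ r ∈ Finset.Icc 1 m,
            (if Nat.gcd d q ∣ r then (r:ℝ) * (Nat.gcd d q : ℝ) else 0) := Finset.sum_comm
      _ = _ := by
          refine Finset.sum_congr rfl fun d _ => ?_
          rw [Finset.mul_sum, ← Finset.sum_filter]
          exact Finset.sum_congr rfl fun r _ => mul_comm _ _
  rw [hswap]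
  -- per-d bound
  have hd_bound : ∀ d ∈ Finset.Icc 1 n,
      |(Nat.gcd d q : ℝ) * (∑ r ∈ (Finset.Icc 1 m).filter (fun r => Nat.gcd d q ∣ r), (r:ℝ))
        - K^2/2| ≤ (Nat.gcd d q : ℝ) * K :=
    fun d _ => keyB (Nat.gcd d q) (Nat.gcd_pos_of_pos_right d hq) K hK
  have hstep1 : |(∑ d ∈ Finset.Icc 1 n, (Nat.gcd d q : ℝ) *
      ∑ r ∈ (Finset.Icc 1 m).filter (fun r => Nat.gcd d q ∣ r), (r:ℝ)) - (n:ℝ) * (K^2/2)|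
      ≤ (∑ d ∈ Finset.Icc 1 n, (Nat.gcd d q : ℝ)) * K := by
    have hconst : (n:ℝ) * (K^2/2) = ∑ _d ∈ Finset.Icc 1 n, (K^2/2) := by
      rw [Finset.sum_const, nsmul_eq_mul, Nat.card_Icc]
      norm_num
    rw [hconst, ← Finset.sum_sub_distrib, Finset.sum_mul]
    calc |∑ d ∈ Finset.Icc 1 n, ((Nat.gcd d q : ℝ) *
          (∑ r ∈ (Finset.Icc 1 m).filter (fun r => Nat.gcd d q ∣ r), (r:ℝ)) - K^2/2)|
        ≤ ∑ d ∈ Finset.Icc 1 n, |(Nat.gcd d q : ℝ) *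
          (∑ r ∈ (Finset.Icc 1 m).filter (fun r => Nat.gcd d q ∣ r), (r:ℝ)) - K^2/2| :=
          Finset.abs_sum_le_sum_abs _ _
      _ ≤ ∑ d ∈ Finset.Icc 1 n, (Nat.gcd d q : ℝ) * K := Finset.sum_le_sum hd_bound
  -- gather
  have hN0 : (0:ℝ) < N := by linarith
  have hK0 : (0:ℝ) < K := by linarith
  have hfloorN : (n:ℝ) ≤ N := Nat.floor_le hN0.le
  have hfloorN2 : N < (n:ℝ) + 1 := Nat.lt_floor_add_one N
  have hgcdsum : (∑ d ∈ Finset.Icc 1 n, (Nat.gcd d q : ℝ)) ≤ (q.divisors.card : ℝ) * N := by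
    calc (∑ d ∈ Finset.Icc 1 n, (Nat.gcd d q : ℝ)) ≤ (q.divisors.card : ℝ) * n :=
        gcd_sum_le q n hq
      _ ≤ (q.divisors.card : ℝ) * N :=
        mul_le_mul_of_nonneg_left hfloorN (Nat.cast_nonneg _)
  have hdiv : (q.divisors.card : ℝ) ≤ Cd * (q:ℝ)^ε := hCd q hq
  have hqe : (1:ℝ) ≤ (q:ℝ)^ε := by
    apply Real.one_le_rpow _ hε.le
    exact_mod_cast hq
  have hsum_nonneg : (0:ℝ) ≤ ∑ d ∈ Finset.Icc 1 n, (Nat.gcd d q : ℝ) := by positivity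
  have htri : |(∑ d ∈ Finset.Icc 1 n, (Nat.gcd d q : ℝ) *
      ∑ r ∈ (Finset.Icc 1 m).filter (fun r => Nat.gcd d q ∣ r), (r:ℝ)) - N * K^2/2|
      ≤ (∑ d ∈ Finset.Icc 1 n, (Nat.gcd d q : ℝ)) * K + K^2/2 := by
    have h2 : |(n:ℝ) * (K^2/2) - N * K^2/2| ≤ K^2/2 := by
      rw [abs_le]
      constructor <;> nlinarith
    calc |(∑ d ∈ Finset.Icc 1 n, (Nat.gcd d q : ℝ) *
        ∑ r ∈ (Finset.Icc 1 m).filter (fun r => Nat.gcd d q ∣ r), (r:ℝ)) - N * K^2/2|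
        ≤ |(∑ d ∈ Finset.Icc 1 n, (Nat.gcd d q : ℝ) *
            ∑ r ∈ (Finset.Icc 1 m).filter (fun r => Nat.gcd d q ∣ r), (r:ℝ)) - (n:ℝ) * (K^2/2)|
          + |(n:ℝ) * (K^2/2) - N * K^2/2| := abs_sub_le _ _ _
      _ ≤ (∑ d ∈ Finset.Icc 1 n, (Nat.gcd d q : ℝ)) * K + K^2/2 :=
          add_le_add hstep1 h2
  calc |(∑ d ∈ Finset.Icc 1 n, (Nat.gcd d q : ℝ) *
      ∑ r ∈ (Finset.Icc 1 m).filter (fun r => Nat.gcd d q ∣ r), (r:ℝ)) - N * K^2/2|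
      ≤ (∑ d ∈ Finset.Icc 1 n, (Nat.gcd d q : ℝ)) * K + K^2/2 := htri
    _ ≤ (Cd * (q:ℝ)^ε * N) * K + K^2/2 := by
        apply add_le_add_left
        apply mul_le_mul_of_nonneg_right _ hK0.le
        calc (∑ d ∈ Finset.Icc 1 n, (Nat.gcd d q : ℝ)) ≤ (q.divisors.card : ℝ) * N := hgcdsum
          _ ≤ Cd * (q:ℝ)^ε * N := mul_le_mul_of_nonneg_right hdiv hN0.le
    _ ≤ Cd * K * (K + N) * (q:ℝ)^ε := by
        have hCq : (1:ℝ) ≤ Cd * (q:ℝ)^ε := le_trans hCd1 (le_mul_of_one_le_right (by linarith) hqe)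
        nlinarith [mul_pos hK0 hK0, mul_pos hK0 hN0, hqe, hCd1]
end

section
/- Let δ > 0 and ε > 0. There exists a constant C (depending only on δ and ε) such that for all real x ≥ 2, all real N ≥ 2, and all positive integers q with q ≤ x^{1−δ} and N ≥ q^ε, ∑_{n ≤ x, gcd(n,q)=1} τ_N(n)/n ≤ C · φ(q)² (log x)(log N) / q². -/
open Finset
open scoped Classical

lemma sum_Icc_inv_le (M : ℕ) : ∑ n ∈ Finset.Icc 1 M, (1:ℝ)/n ≤ 1 + Real.log M := by
  have h := harmonic_le_one_add_log M
  have h2 : ((harmonic M : ℚ) : ℝ) = ∑ n ∈ Finset.Icc 1 M, (1:ℝ)/n := by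
    rw [harmonic_eq_sum_Icc]
    push_cast
    simp [one_div]
  linarith [h2 ▸ h]

lemma prod_Icc_one_sub_inv_sq (M : ℕ) (hM : 1 ≤ M) :
    ∏ n ∈ Finset.Icc 2 M, (1 - 1/(n:ℝ)^2) = ((M:ℝ)+1)/(2*M) := by
  induction M with
  | zero => omega
  | succ m ih =>
    rcases Nat.eq_zero_or_pos m with h1 | h1
    · subst h1; norm_num
    · rw [Finset.prod_Icc_succ_top (by omega), ih h1]
      have hm0 : (m:ℝ) ≠ 0 := by positivity
      have hm1 : ((m:ℝ)+1) ≠ 0 := by positivity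
      push_cast
      field_simp
      ring

lemma two_pow_primeFactors_le (ε : ℝ) (hε : 0 < ε) :
    ∃ c : ℝ, 1 ≤ c ∧ ∀ q : ℕ, 0 < q → (2:ℝ)^(q.primeFactors.card) ≤ c * (q:ℝ)^ε := by
  set P₀ : ℕ := ⌈(2:ℝ)^(1/ε)⌉₊ with hP₀
  refine ⟨(2:ℝ)^P₀, one_le_pow₀ one_le_two, fun q hq => ?_⟩
  set s := q.primeFactors with hs
  have hprime : ∀ p ∈ s, p.Prime := fun p hp => Nat.prime_of_mem_primeFactors hp
  have h1 : (2:ℝ)^(s.card) = ∏ p ∈ s, (2:ℝ) := by rw [Finset.prod_const]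
  have h2 : ∏ p ∈ s, (2:ℝ) ≤ ∏ p ∈ s, (if p ≤ P₀ then (2:ℝ) else (p:ℝ)^ε) := by
    apply Finset.prod_le_prod (fun _ _ => by norm_num)
    intro p hp
    split
    · exact le_refl _
    · next h =>
      have hpP : (2:ℝ)^(1/ε) ≤ (p:ℝ) := by
        calc (2:ℝ)^(1/ε) ≤ (P₀:ℕ) := Nat.le_ceil _
        _ ≤ (p:ℝ) := by exact_mod_cast (Nat.le_of_lt (Nat.lt_of_not_le h))
      calc (2:ℝ) = ((2:ℝ)^(1/ε))^ε := by
            rw [← Real.rpow_mul (by norm_num), one_div, inv_mul_cancel₀ hε.ne', Real.rpow_one]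
        _ ≤ (p:ℝ)^ε := Real.rpow_le_rpow (Real.rpow_nonneg (by norm_num) _) hpP hε.le
  have h3 : ∏ p ∈ s, (if p ≤ P₀ then (2:ℝ) else (p:ℝ)^ε)
      = (∏ p ∈ s.filter (fun p => p ≤ P₀), (2:ℝ)) *
        ∏ p ∈ s.filter (fun p => ¬ p ≤ P₀), (p:ℝ)^ε := by
    rw [← Finset.prod_filter_mul_prod_filter_not s (fun p => p ≤ P₀)]
    congr 1
    · exact Finset.prod_congr rfl (fun p hp => by simp [(Finset.mem_filter.mp hp).2])
    · exact Finset.prod_congr rfl (fun p hp => by simp [(Finset.mem_filter.mp hp).2])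
  have h4 : (∏ p ∈ s.filter (fun p => p ≤ P₀), (2:ℝ)) ≤ 2^P₀ := by
    rw [Finset.prod_const]
    apply pow_le_pow_right₀ one_le_two
    calc (s.filter (fun p => p ≤ P₀)).card ≤ (Finset.Icc 1 P₀).card := by
          apply Finset.card_le_card
          intro p hp
          rcases Finset.mem_filter.mp hp with ⟨hps, hpP⟩
          exact Finset.mem_Icc.mpr ⟨(hprime p hps).one_lt.le.trans' (by norm_num), hpP⟩
      _ = P₀ := by simp
  have h5 : ∏ p ∈ s.filter (fun p => ¬ p ≤ P₀), (p:ℝ)^ε ≤ (q:ℝ)^ε := by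
    have hps : ∀ p ∈ s.filter (fun p => ¬ p ≤ P₀), (0:ℝ) ≤ (p:ℝ) := fun p _ => by positivity
    rw [Real.finset_prod_rpow _ _ hps]
    apply Real.rpow_le_rpow (by positivity) _ hε.le
    rw [← Nat.cast_prod]
    have hd : (∏ p ∈ s.filter (fun p => ¬ p ≤ P₀), p) ∣ q := by
      refine dvd_trans ?_ (Nat.prod_primeFactors_dvd q)
      exact Finset.prod_dvd_prod_of_subset _ _ _ (Finset.filter_subset _ _)
    exact_mod_cast Nat.le_of_dvd hq hd
  calc (2:ℝ)^(s.card) ≤ (∏ p ∈ s.filter (fun p => p ≤ P₀), (2:ℝ)) *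
        ∏ p ∈ s.filter (fun p => ¬ p ≤ P₀), (p:ℝ)^ε := by rw [h1, ← h3]; exact h2
    _ ≤ 2^P₀ * (q:ℝ)^ε := by
        apply mul_le_mul h4 h5 (Finset.prod_nonneg (fun p _ => by positivity)) (by positivity)

lemma aux_pairing (y : ℝ) (hy : 2 ≤ y) (q : ℕ) (hq : 0 < q) :
    (∑ m ∈ (Finset.Icc 1 ⌊y⌋₊).filter (fun m => Nat.Coprime m q), (1:ℝ)/m) *
    (∑ k ∈ (Finset.Icc 1 ⌊y⌋₊).filter (fun k => k ∣ q^k), (1:ℝ)/k) ≤ 4 * Real.log y := by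
  have hy0 : (0:ℝ) < y := by linarith
  set F := ⌊y⌋₊ with hF
  set M := (Finset.Icc 1 F).filter (fun m => Nat.Coprime m q) with hM
  set K := (Finset.Icc 1 F).filter (fun k => k ∣ q^k) with hK
  have e1 : (∑ m ∈ M, (1:ℝ)/m) * (∑ k ∈ K, (1:ℝ)/k)
      = ∑ p ∈ M ×ˢ K, (1:ℝ)/((p.1 * p.2 : ℕ)) := by
    rw [Finset.sum_mul_sum, ← Finset.sum_product']
    exact Finset.sum_congr rfl (fun p _ => by push_cast; rw [one_div_mul_one_div])
  have hinj : ∀ p ∈ M ×ˢ K, ∀ r ∈ M ×ˢ K,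
      (fun p : ℕ × ℕ => p.1 * p.2) p = (fun p : ℕ × ℕ => p.1 * p.2) r → p = r := by
    rintro ⟨m₁, k₁⟩ hp ⟨m₂, k₂⟩ hr h
    simp only [Finset.mem_product, hM, hK, Finset.mem_filter, Finset.mem_Icc] at hp hr
    simp only at h
    obtain ⟨⟨⟨hm₁1, hm₁F⟩, hm₁c⟩, ⟨hk₁1, hk₁F⟩, hk₁d⟩ := hp
    obtain ⟨⟨⟨hm₂1, hm₂F⟩, hm₂c⟩, ⟨hk₂1, hk₂F⟩, hk₂d⟩ := hr
    have hc12 : Nat.Coprime k₂ m₁ :=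
      (((hm₁c.pow_right k₂).coprime_dvd_right hk₂d)).symm
    have hc21 : Nat.Coprime k₁ m₂ :=
      (((hm₂c.pow_right k₁).coprime_dvd_right hk₁d)).symm
    have hd1 : k₂ ∣ k₁ := hc12.dvd_of_dvd_mul_left ⟨m₂, by linarith [h]⟩
    have hd2 : k₁ ∣ k₂ := hc21.dvd_of_dvd_mul_left ⟨m₁, by linarith [h]⟩
    have hkk : k₁ = k₂ := Nat.dvd_antisymm hd2 hd1
    subst hkk
    have : m₁ = m₂ := Nat.eq_of_mul_eq_mul_right (by omega) h
    simp [this]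
  have e2 : ∑ p ∈ M ×ˢ K, (1:ℝ)/((p.1 * p.2 : ℕ))
      = ∑ n ∈ (M ×ˢ K).image (fun p : ℕ × ℕ => p.1 * p.2), (1:ℝ)/n :=
    (Finset.sum_image (f := fun n : ℕ => (1:ℝ)/n) hinj).symm
  have e3 : ∑ n ∈ (M ×ˢ K).image (fun p : ℕ × ℕ => p.1 * p.2), (1:ℝ)/n
      ≤ ∑ n ∈ Finset.Icc 1 (F*F), (1:ℝ)/n := by
    apply Finset.sum_le_sum_of_subset_of_nonneg
    · intro n hn
      obtain ⟨p, hp, rfl⟩ := Finset.mem_image.mp hn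
      simp only [Finset.mem_product, hM, hK, Finset.mem_filter, Finset.mem_Icc] at hp
      exact Finset.mem_Icc.mpr ⟨Nat.mul_pos hp.1.1.1 hp.2.1.1,
        Nat.mul_le_mul hp.1.1.2 hp.2.1.2⟩
    · intro n _ _; positivity
  have e4 : ∑ n ∈ Finset.Icc 1 (F*F), (1:ℝ)/n ≤ 1 + Real.log (F*F : ℕ) := sum_Icc_inv_le _
  have hFy : (F:ℝ) ≤ y := Nat.floor_le hy0.le
  have hF1 : 1 ≤ F := Nat.le_floor (by exact_mod_cast (by linarith : (1:ℝ) ≤ y))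
  have hF1' : (1:ℝ) ≤ (F:ℝ) := by exact_mod_cast hF1
  have hlog : Real.log ((F*F : ℕ):ℝ) ≤ 2 * Real.log y := by
    have h1 : ((F*F : ℕ):ℝ) ≤ y * y := by push_cast; nlinarith [hFy, hF1']
    calc Real.log ((F*F : ℕ):ℝ) ≤ Real.log (y*y) := by
          apply Real.log_le_log (by positivity) h1
      _ = 2 * Real.log y := by rw [Real.log_mul hy0.ne' hy0.ne']; ring
  have hl2 : (1:ℝ) ≤ 2 * Real.log y := by
    have := Real.log_two_gt_d9
    have h2y : Real.log 2 ≤ Real.log y := Real.log_le_log (by norm_num) hy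
    linarith
  calc (∑ m ∈ M, (1:ℝ)/m) * (∑ k ∈ K, (1:ℝ)/k)
      ≤ 1 + Real.log ((F*F : ℕ):ℝ) := by rw [e1, e2]; linarith [e3, e4]
    _ ≤ 4 * Real.log y := by linarith

lemma totient_div_eq_prod (q : ℕ) (hq : 0 < q) :
    (q.totient : ℝ)/q = ∏ p ∈ q.primeFactors, (1 - (p:ℝ)⁻¹) := by
  have h := Nat.totient_eq_mul_prod_factors q
  have h2 : (q.totient : ℝ) = q * ∏ p ∈ q.primeFactors, (1 - (p:ℝ)⁻¹) := by
    have := congrArg (fun z : ℚ => (z : ℝ)) h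
    push_cast at this
    exact this
  rw [h2]
  field_simp

lemma aux_Plower (y : ℝ) (hy : 2 ≤ y) (q : ℕ) (hq : 0 < q) :
    (∏ p ∈ q.primeFactors, ((1:ℝ) - (p:ℝ)⁻¹)⁻¹)/2 - (2:ℝ)^(q.primeFactors.card)/y
      ≤ ∑ k ∈ (Finset.Icc 1 ⌊y⌋₊).filter (fun k => k ∣ q^k), (1:ℝ)/k := by
  have hy0 : (0:ℝ) < y := by linarith
  set s := q.primeFactors with hs
  set F := ⌊y⌋₊ with hF
  set K := (Finset.Icc 1 F).filter (fun k => k ∣ q^k) with hK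
  set R := ∏ p ∈ s, ((1:ℝ) - (p:ℝ)⁻¹)⁻¹ with hR
  have hprime : ∀ p ∈ s, p.Prime := fun p hp => Nat.prime_of_mem_primeFactors hp
  have hp2 : ∀ p ∈ s, 2 ≤ p := fun p hp => (hprime p hp).two_le
  have hp2' : ∀ p ∈ s, (2:ℝ) ≤ (p:ℝ) := fun p hp => by exact_mod_cast hp2 p hp
  have hA : ∏ p ∈ s, ((p:ℝ)⁻¹ + 1) = ∑ t ∈ s.powerset, ∏ p ∈ t, (p:ℝ)⁻¹ := by
    rw [Finset.prod_add]
    exact Finset.sum_congr rfl (fun t ht => by simp)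
  have hid : ∏ p ∈ s, ((p:ℝ)⁻¹ + 1) = R * ∏ p ∈ s, (1 - 1/(p:ℝ)^2) := by
    rw [hR, ← Finset.prod_mul_distrib]
    apply Finset.prod_congr rfl
    intro p hp
    have h2 : (2:ℝ) ≤ (p:ℝ) := hp2' p hp
    have hne : (p:ℝ) ≠ 0 := by linarith
    have hne2 : (1:ℝ) - (p:ℝ)⁻¹ ≠ 0 := by
      have : (p:ℝ)⁻¹ ≤ 1/2 := by
        rw [inv_eq_one_div]; apply div_le_div_of_nonneg_left <;> linarith
      linarith
    rw [eq_comm, inv_mul_eq_div, div_eq_iff hne2]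
    field_simp
    ring
  have hq1 : (1:ℝ) ≤ (q:ℝ) := by exact_mod_cast hq
  have hsq : (1:ℝ)/2 ≤ ∏ p ∈ s, (1 - 1/(p:ℝ)^2) := by
    have hsub : s ⊆ Finset.Icc 2 q := fun p hp => Finset.mem_Icc.mpr
      ⟨hp2 p hp, Nat.le_of_dvd hq (Nat.dvd_of_mem_primeFactors hp)⟩
    have h1 : ∀ n ∈ Finset.Icc 2 q, (0:ℝ) ≤ 1 - 1/(n:ℝ)^2 := by
      intro n hn
      have h2 : (2:ℝ) ≤ (n:ℝ) := by exact_mod_cast (Finset.mem_Icc.mp hn).1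
      have : 1/(n:ℝ)^2 ≤ 1/2^2 := by apply div_le_div_of_nonneg_left <;> nlinarith
      linarith
    have hprodIcc : ∏ n ∈ Finset.Icc 2 q, (1 - 1/(n:ℝ)^2) = ((q:ℝ)+1)/(2*q) :=
      prod_Icc_one_sub_inv_sq q hq
    have hsplit : (∏ n ∈ Finset.Icc 2 q \ s, (1 - 1/(n:ℝ)^2)) * ∏ p ∈ s, (1 - 1/(p:ℝ)^2)
        = ∏ n ∈ Finset.Icc 2 q, (1 - 1/(n:ℝ)^2) := Finset.prod_sdiff hsub
    have hle1 : ∏ n ∈ Finset.Icc 2 q \ s, (1 - 1/(n:ℝ)^2) ≤ 1 :=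
      Finset.prod_le_one (fun n hn => h1 n (Finset.mem_sdiff.mp hn).1)
        (fun n hn => by
          have hnn : (0:ℝ) ≤ 1/(n:ℝ)^2 := by positivity
          linarith)
    have hPs : (0:ℝ) ≤ ∏ p ∈ s, (1 - 1/(p:ℝ)^2) :=
      Finset.prod_nonneg (fun p hp => h1 p (hsub hp))
    have h5 : ((q:ℝ)+1)/(2*q) ≤ ∏ p ∈ s, (1 - 1/(p:ℝ)^2) := by
      rw [← hprodIcc, ← hsplit]
      nlinarith [hle1, hPs]
    have h6 : (1:ℝ)/2 ≤ ((q:ℝ)+1)/(2*q) := by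
      rw [div_le_div_iff₀ (by norm_num) (by linarith)]
      linarith
    linarith
  -- good part
  have hgood : ∑ t ∈ s.powerset.filter (fun t => ∏ p ∈ t, p ≤ F), ∏ p ∈ t, (p:ℝ)⁻¹
      ≤ ∑ k ∈ K, (1:ℝ)/k := by
    have hinj : ∀ t₁ ∈ s.powerset.filter (fun t => ∏ p ∈ t, p ≤ F),
        ∀ t₂ ∈ s.powerset.filter (fun t => ∏ p ∈ t, p ≤ F),
        (∏ p ∈ t₁, p) = (∏ p ∈ t₂, p) → t₁ = t₂ := by
      intro t₁ h₁ t₂ h₂ h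
      have hpt₁ : ∀ p ∈ t₁, p.Prime :=
        fun p hp => hprime p (Finset.mem_powerset.mp (Finset.mem_filter.mp h₁).1 hp)
      have hpt₂ : ∀ p ∈ t₂, p.Prime :=
        fun p hp => hprime p (Finset.mem_powerset.mp (Finset.mem_filter.mp h₂).1 hp)
      rw [← Nat.primeFactors_prod hpt₁, ← Nat.primeFactors_prod hpt₂, h]
    calc ∑ t ∈ s.powerset.filter (fun t => ∏ p ∈ t, p ≤ F), ∏ p ∈ t, (p:ℝ)⁻¹
        = ∑ t ∈ s.powerset.filter (fun t => ∏ p ∈ t, p ≤ F), (1:ℝ)/((∏ p ∈ t, p : ℕ)) := by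
          apply Finset.sum_congr rfl
          intro t ht
          rw [Finset.prod_inv_distrib]
          push_cast
          rw [one_div]
      _ = ∑ n ∈ (s.powerset.filter (fun t => ∏ p ∈ t, p ≤ F)).image (fun t => ∏ p ∈ t, p),
            (1:ℝ)/n := (Finset.sum_image (f := fun n : ℕ => (1:ℝ)/n) hinj).symm
      _ ≤ ∑ k ∈ K, (1:ℝ)/k := by
          apply Finset.sum_le_sum_of_subset_of_nonneg
          · intro n hn
            obtain ⟨t, ht, rfl⟩ := Finset.mem_image.mp hn
            obtain ⟨htp, htF⟩ := Finset.mem_filter.mp ht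
            have hts : t ⊆ s := Finset.mem_powerset.mp htp
            have hpos : 0 < ∏ p ∈ t, p :=
              Finset.prod_pos (fun p hp => (hprime p (hts hp)).pos)
            have hdvd : (∏ p ∈ t, p) ∣ q ^ (∏ p ∈ t, p) := by
              have h1 : (∏ p ∈ t, p) ∣ q ^ t.card := by
                calc (∏ p ∈ t, p) ∣ ∏ p ∈ t, q :=
                      Finset.prod_dvd_prod_of_dvd _ _
                        (fun p hp => Nat.dvd_of_mem_primeFactors (hts hp))
                  _ = q ^ t.card := Finset.prod_const q
              refine h1.trans (pow_dvd_pow q ?_)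
              calc t.card ≤ 2 ^ t.card := Nat.lt_two_pow_self.le
                _ = ∏ p ∈ t, 2 := (Finset.prod_const 2).symm
                _ ≤ ∏ p ∈ t, p := Finset.prod_le_prod' (fun p hp => hp2 p (hts hp))
            exact Finset.mem_filter.mpr ⟨Finset.mem_Icc.mpr ⟨hpos, htF⟩, hdvd⟩
          · intro n _ _; positivity
  -- bad part
  have hbad : ∑ t ∈ s.powerset.filter (fun t => ¬ ∏ p ∈ t, p ≤ F), ∏ p ∈ t, (p:ℝ)⁻¹
      ≤ (2:ℝ)^(s.card)/y := by
    have hterm : ∀ t ∈ s.powerset.filter (fun t => ¬ ∏ p ∈ t, p ≤ F),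
        ∏ p ∈ t, (p:ℝ)⁻¹ ≤ 1/y := by
      intro t ht
      obtain ⟨htp, htF⟩ := Finset.mem_filter.mp ht
      have hyP : y ≤ ((∏ p ∈ t, p : ℕ):ℝ) := by
        have h1 : F + 1 ≤ ∏ p ∈ t, p := by omega
        have h2 : y < (F:ℝ) + 1 := Nat.lt_floor_add_one y
        have h3 : ((F:ℕ):ℝ) + 1 ≤ ((∏ p ∈ t, p : ℕ):ℝ) := by exact_mod_cast h1
        linarith
      have hprodpos : (0:ℝ) < ((∏ p ∈ t, p : ℕ):ℝ) := by linarith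
      rw [Finset.prod_inv_distrib, ← Nat.cast_prod, inv_eq_one_div]
      apply div_le_div_of_nonneg_left (by norm_num) hy0 hyP
    calc ∑ t ∈ s.powerset.filter (fun t => ¬ ∏ p ∈ t, p ≤ F), ∏ p ∈ t, (p:ℝ)⁻¹
        ≤ (s.powerset.filter (fun t => ¬ ∏ p ∈ t, p ≤ F)).card • ((1:ℝ)/y) :=
          Finset.sum_le_card_nsmul _ _ _ hterm
      _ ≤ (2:ℝ)^(s.card)/y := by
          rw [nsmul_eq_mul]
          have hc : ((s.powerset.filter (fun t => ¬ ∏ p ∈ t, p ≤ F)).card : ℝ)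
              ≤ (2:ℝ)^(s.card) := by
            have h1 : (s.powerset.filter (fun t => ¬ ∏ p ∈ t, p ≤ F)).card
                ≤ s.powerset.card := Finset.card_le_card (Finset.filter_subset _ _)
            have h2 : s.powerset.card = 2^(s.card) := Finset.card_powerset s
            have : (s.powerset.filter (fun t => ¬ ∏ p ∈ t, p ≤ F)).card ≤ 2^(s.card) :=
              h2 ▸ h1
            exact_mod_cast this
          rw [div_eq_mul_one_div]
          have h1y : (0:ℝ) ≤ 1/y := by positivity
          calc (↑(Finset.card _) : ℝ) * (1 * (1/y)) = (↑(Finset.card _) : ℝ) * (1/y) := by ring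
            _ ≤ (2:ℝ)^(s.card) * (1/y) := mul_le_mul_of_nonneg_right hc h1y
            _ = (2:ℝ)^(s.card) / y := by ring
  -- combine
  have hsplit2 := Finset.sum_filter_add_sum_filter_not s.powerset
    (fun t => ∏ p ∈ t, p ≤ F) (fun t => ∏ p ∈ t, (p:ℝ)⁻¹)
  have hR0 : (0:ℝ) ≤ R := Finset.prod_nonneg (fun p hp => by
    have h2 : (2:ℝ) ≤ (p:ℝ) := hp2' p hp
    have : (p:ℝ)⁻¹ ≤ 1/2 := by
      rw [inv_eq_one_div]; apply div_le_div_of_nonneg_left <;> linarith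
    have : (0:ℝ) ≤ 1 - (p:ℝ)⁻¹ := by linarith
    positivity)
  have hmain : R/2 ≤ ∑ t ∈ s.powerset, ∏ p ∈ t, (p:ℝ)⁻¹ := by
    rw [← hA, hid]
    nlinarith [hsq, hR0]
  linarith [hgood, hbad, hsplit2, hmain]

lemma sum_inv_coprime_le (ε : ℝ) (hε : 0 < ε) :
    ∃ C : ℝ, 0 ≤ C ∧ ∀ y : ℝ, 2 ≤ y → ∀ q : ℕ, 0 < q → (q:ℝ)^ε ≤ y →
      ∑ m ∈ (Finset.Icc 1 ⌊y⌋₊).filter (fun m => Nat.Coprime m q), (1:ℝ)/m ≤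
        C * ((q.totient : ℝ)/q) * Real.log y := by
  obtain ⟨c, hc1, hc⟩ := two_pow_primeFactors_le (ε/2) (by positivity)
  set Y₀ : ℝ := (4*c)^2 with hY₀
  have hY₀1 : (1:ℝ) ≤ Y₀ := by nlinarith
  have hY₀0 : (0:ℝ) < Y₀ := by linarith
  refine ⟨16 + 3*Y₀^(1/ε), by positivity, ?_⟩
  intro y hy q hq hqy
  have hy0 : (0:ℝ) < y := by linarith
  have hlogy : (0:ℝ) < Real.log y := Real.log_pos (by linarith)
  have hφq : (0:ℝ) ≤ (q.totient:ℝ)/q := by positivity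
  set S := ∑ m ∈ (Finset.Icc 1 ⌊y⌋₊).filter (fun m => Nat.Coprime m q), (1:ℝ)/m with hS
  have hS0 : (0:ℝ) ≤ S := Finset.sum_nonneg (fun m _ => by positivity)
  have hq0 : (0:ℝ) < (q:ℝ) := by exact_mod_cast hq
  have hφ1 : (1:ℝ) ≤ (q.totient:ℝ) := by exact_mod_cast Nat.totient_pos.mpr hq
  by_cases hcase : Y₀ ≤ y
  · -- large y
    set R := ∏ p ∈ q.primeFactors, ((1:ℝ) - (p:ℝ)⁻¹)⁻¹ with hR
    have hfac : ∀ p ∈ q.primeFactors, (0:ℝ) < 1 - (p:ℝ)⁻¹ ∧ 1 - (p:ℝ)⁻¹ ≤ 1 := by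
      intro p hp
      have h2 : (2:ℝ) ≤ (p:ℝ) := by
        exact_mod_cast (Nat.prime_of_mem_primeFactors hp).two_le
      have hpinv : (p:ℝ)⁻¹ ≤ 1/2 := by
        rw [inv_eq_one_div]; apply div_le_div_of_nonneg_left <;> linarith
      have hpinv0 : (0:ℝ) < (p:ℝ)⁻¹ := by positivity
      constructor <;> linarith
    have hR1 : (1:ℝ) ≤ R := by
      rw [hR]
      have h := Finset.prod_le_prod (f := fun _ : ℕ => (1:ℝ))
        (g := fun p : ℕ => ((1:ℝ) - (p:ℝ)⁻¹)⁻¹) (s := q.primeFactors)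
        (fun p _ => by norm_num)
        (fun p hp => by
          obtain ⟨h1, h2⟩ := hfac p hp
          rw [le_inv_comm₀ one_pos h1, inv_one]
          exact h2)
      simpa using h
    have hRinv : R⁻¹ = (q.totient:ℝ)/q := by
      rw [hR, ← Finset.prod_inv_distrib]
      simp only [inv_inv]
      exact (totient_div_eq_prod q hq).symm
    have htail : (2:ℝ)^(q.primeFactors.card)/y ≤ 1/4 := by
      have h1 : (2:ℝ)^(q.primeFactors.card) ≤ c * (q:ℝ)^(ε/2) := hc q hq
      have h2 : (q:ℝ)^(ε/2) ≤ y^((1:ℝ)/2) := by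
        have e1 : (q:ℝ)^(ε/2) = ((q:ℝ)^ε)^((1:ℝ)/2) := by
          rw [← Real.rpow_mul (by positivity), mul_one_div]
        rw [e1]
        exact Real.rpow_le_rpow (by positivity) hqy (by norm_num)
      have h3 : 4*c ≤ y^((1:ℝ)/2) := by
        have e1 : ((4*c)^2)^((1:ℝ)/2) = 4*c := by
          rw [← Real.rpow_natCast (4*c) 2, ← Real.rpow_mul (by positivity)]
          norm_num
        calc 4*c = ((4*c)^2)^((1:ℝ)/2) := e1.symm
          _ ≤ y^((1:ℝ)/2) := Real.rpow_le_rpow (by positivity) hcase (by norm_num)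
      have hsqrt : (0:ℝ) < y^((1:ℝ)/2) := Real.rpow_pos_of_pos hy0 _
      have hyy : y^((1:ℝ)/2) * y^((1:ℝ)/2) = y := by
        rw [← Real.rpow_add hy0]; norm_num
      rw [div_le_iff₀ hy0]
      calc (2:ℝ)^(q.primeFactors.card) ≤ c * y^((1:ℝ)/2) := le_trans h1
            (mul_le_mul_of_nonneg_left h2 (by linarith))
        _ ≤ (y^((1:ℝ)/2)/4) * y^((1:ℝ)/2) := by
            apply mul_le_mul_of_nonneg_right _ hsqrt.le
            linarith
        _ = 1/4 * y := by rw [div_mul_eq_mul_div, hyy]; ring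
    have hP := aux_Plower y hy q hq
    have hpair := aux_pairing y hy q hq
    set P := ∑ k ∈ (Finset.Icc 1 ⌊y⌋₊).filter (fun k => k ∣ q^k), (1:ℝ)/k with hPdef
    have hP4 : R/4 ≤ P := by linarith
    have hRpos : (0:ℝ) < R := by linarith
    have hkey : S ≤ 16 * Real.log y / R := by
      rw [le_div_iff₀ hRpos]
      nlinarith [mul_le_mul_of_nonneg_left hP4 hS0]
    calc S ≤ 16 * Real.log y / R := hkey
      _ = 16 * ((q.totient:ℝ)/q) * Real.log y := by
          rw [div_eq_mul_inv, hRinv]; ring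
      _ ≤ (16 + 3*Y₀^(1/ε)) * ((q.totient:ℝ)/q) * Real.log y := by
          have h0 : (0:ℝ) ≤ 3*Y₀^(1/ε) := by positivity
          nlinarith [mul_nonneg hφq hlogy.le]
  · -- small y
    push_neg at hcase
    have hqle : (q:ℝ) ≤ Y₀^(1/ε) := by
      have e1 : ((q:ℝ)^ε)^((1:ℝ)/ε) = (q:ℝ) := by
        rw [← Real.rpow_mul (by positivity)]
        rw [mul_one_div, div_self hε.ne', Real.rpow_one]
      calc (q:ℝ) = ((q:ℝ)^ε)^((1:ℝ)/ε) := e1.symm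
        _ ≤ y^((1:ℝ)/ε) := Real.rpow_le_rpow (by positivity) hqy (by positivity)
        _ ≤ Y₀^((1:ℝ)/ε) := Real.rpow_le_rpow hy0.le hcase.le (by positivity)
    have hS3 : S ≤ 3 * Real.log y := by
      have h1 : S ≤ ∑ m ∈ Finset.Icc 1 ⌊y⌋₊, (1:ℝ)/m :=
        Finset.sum_le_sum_of_subset_of_nonneg (Finset.filter_subset _ _)
          (fun m _ _ => by positivity)
      have h2 : ∑ m ∈ Finset.Icc 1 ⌊y⌋₊, (1:ℝ)/m ≤ 1 + Real.log ⌊y⌋₊ := sum_Icc_inv_le _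
      have hF1 : 1 ≤ ⌊y⌋₊ := Nat.le_floor (by exact_mod_cast (by linarith : (1:ℝ) ≤ y))
      have hF1' : (1:ℝ) ≤ (⌊y⌋₊:ℝ) := by exact_mod_cast hF1
      have h3 : Real.log (⌊y⌋₊:ℝ) ≤ Real.log y :=
        Real.log_le_log (by linarith) (Nat.floor_le hy0.le)
      have h4 : (1:ℝ) ≤ 2 * Real.log y := by
        have := Real.log_two_gt_d9
        have h2y : Real.log 2 ≤ Real.log y := Real.log_le_log (by norm_num) hy
        linarith
      linarith
    have hkey : (1:ℝ) ≤ Y₀^(1/ε) * ((q.totient:ℝ)/q) := by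
      have h1 : (q:ℝ) * ((q.totient:ℝ)/q) = (q.totient:ℝ) := by field_simp
      calc (1:ℝ) ≤ (q:ℝ) * ((q.totient:ℝ)/q) := by rw [h1]; exact hφ1
        _ ≤ Y₀^(1/ε) * ((q.totient:ℝ)/q) := mul_le_mul_of_nonneg_right hqle hφq
    calc S ≤ 3 * Real.log y := hS3
      _ ≤ (16 + 3*Y₀^(1/ε)) * ((q.totient:ℝ)/q) * Real.log y := by
          nlinarith [mul_nonneg hφq hlogy.le, mul_le_mul_of_nonneg_right hkey hlogy.le]

/-- Let δ, ε > 0.  There is a constant C (depending only on δ, ε) such that for all real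
x ≥ 2, N ≥ 2 and all positive integers q with q ≤ x^{1−δ} and N ≥ q^ε,
∑_{n ≤ x, (n,q)=1} τ_N(n)/n ≤ C·φ(q)²(log x)(log N)/q². -/
theorem tau_le_coprime_harmonic_sum (δ ε : ℝ) (hδ : 0 < δ) (hε : 0 < ε) :
    ∃ C : ℝ, ∀ x N : ℝ, 2 ≤ x → 2 ≤ N → ∀ q : ℕ, 0 < q →
      (q : ℝ) ≤ x ^ (1 - δ) → (q : ℝ) ^ ε ≤ N →
      (∑ n ∈ (Finset.Icc 1 ⌊x⌋₊).filter (fun n : ℕ => Nat.Coprime n q),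
        (tauLe N n : ℝ) / (n : ℝ)) ≤
        C * (q.totient : ℝ) ^ 2 * Real.log x * Real.log N / (q : ℝ) ^ 2 := by
  obtain ⟨C₁, hC₁0, hC₁⟩ := sum_inv_coprime_le ε hε
  obtain ⟨C₂, hC₂0, hC₂⟩ := sum_inv_coprime_le 1 one_pos
  refine ⟨C₁ * C₂, ?_⟩
  intro x N hx hN q hq hqx hqN
  have hx0 : (0:ℝ) < x := by linarith
  have hN0 : (0:ℝ) ≤ N := by linarith
  have hq0 : (0:ℝ) < (q:ℝ) := by exact_mod_cast hq
  have hlogN : (0:ℝ) ≤ Real.log N := Real.log_nonneg (by linarith)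
  have hlogx : (0:ℝ) ≤ Real.log x := Real.log_nonneg (by linarith)
  have hqx1 : (q:ℝ)^(1:ℝ) ≤ x := by
    rw [Real.rpow_one]
    calc (q:ℝ) ≤ x^(1-δ) := hqx
      _ ≤ x^(1:ℝ) := Real.rpow_le_rpow_of_exponent_le (by linarith) (by linarith)
      _ = x := Real.rpow_one x
  set A := (Finset.Icc 1 ⌊x⌋₊).filter (fun n : ℕ => Nat.Coprime n q) with hA
  set FN := ⌊N⌋₊ with hFN
  have ha : ∀ n ∈ A, (tauLe N n : ℝ) / n
      = ∑ d ∈ (Finset.Icc 1 FN).filter (fun d => d ∣ n), (1:ℝ)/n := by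
    intro n hn
    have hn1 : 1 ≤ n := (Finset.mem_Icc.mp (Finset.mem_filter.mp hn).1).1
    have heq : n.divisors.filter (fun d : ℕ => (d:ℝ) ≤ N)
        = (Finset.Icc 1 FN).filter (fun d => d ∣ n) := by
      ext d
      simp only [Nat.mem_divisors, Finset.mem_filter, Finset.mem_Icc]
      constructor
      · rintro ⟨⟨hdn, hn0⟩, hdN⟩
        exact ⟨⟨Nat.pos_of_dvd_of_pos hdn (by omega), Nat.le_floor hdN⟩, hdn⟩
      · rintro ⟨⟨hd1, hdF⟩, hdn⟩
        exact ⟨⟨hdn, by omega⟩, (Nat.le_floor_iff hN0).mp hdF⟩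
    rw [tauLe, heq, Finset.sum_const, nsmul_eq_mul]
    ring
  rw [Finset.sum_congr rfl ha]
  set Sx := ∑ m ∈ A, (1:ℝ)/m with hSx
  have hSx0 : (0:ℝ) ≤ Sx := Finset.sum_nonneg (fun m _ => by positivity)
  have hb : ∑ n ∈ A, ∑ d ∈ (Finset.Icc 1 FN).filter (fun d => d ∣ n), (1:ℝ)/n
      = ∑ d ∈ Finset.Icc 1 FN, ∑ n ∈ A.filter (fun n => d ∣ n), (1:ℝ)/n := by
    calc ∑ n ∈ A, ∑ d ∈ (Finset.Icc 1 FN).filter (fun d => d ∣ n), (1:ℝ)/n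
        = ∑ n ∈ A, ∑ d ∈ Finset.Icc 1 FN, if d ∣ n then (1:ℝ)/n else 0 :=
          Finset.sum_congr rfl (fun n _ => (Finset.sum_filter _ _))
      _ = ∑ d ∈ Finset.Icc 1 FN, ∑ n ∈ A, if d ∣ n then (1:ℝ)/n else 0 := Finset.sum_comm
      _ = ∑ d ∈ Finset.Icc 1 FN, ∑ n ∈ A.filter (fun n => d ∣ n), (1:ℝ)/n :=
          Finset.sum_congr rfl (fun d _ => (Finset.sum_filter _ _).symm)
  rw [hb]
  have hc : ∀ d ∈ Finset.Icc 1 FN, ∑ n ∈ A.filter (fun n => d ∣ n), (1:ℝ)/n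
      ≤ (if Nat.Coprime d q then (1:ℝ)/d else 0) * Sx := by
    intro d hd
    obtain ⟨hd1, hdF⟩ := Finset.mem_Icc.mp hd
    have hd0 : (0:ℝ) < (d:ℝ) := by exact_mod_cast hd1
    by_cases hco : Nat.Coprime d q
    · rw [if_pos hco]
      have hinj : ∀ n₁ ∈ A.filter (fun n => d ∣ n), ∀ n₂ ∈ A.filter (fun n => d ∣ n),
          n₁/d = n₂/d → n₁ = n₂ := by
        intro n₁ h₁ n₂ h₂ h
        have hd₁ : d ∣ n₁ := (Finset.mem_filter.mp h₁).2
        have hd₂ : d ∣ n₂ := (Finset.mem_filter.mp h₂).2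
        calc n₁ = d * (n₁/d) := (Nat.mul_div_cancel' hd₁).symm
          _ = d * (n₂/d) := by rw [h]
          _ = n₂ := Nat.mul_div_cancel' hd₂
      have himg : (A.filter (fun n => d ∣ n)).image (fun n => n/d) ⊆ A := by
        intro m hm
        obtain ⟨n, hn, rfl⟩ := Finset.mem_image.mp hm
        obtain ⟨hnA, hdn⟩ := Finset.mem_filter.mp hn
        obtain ⟨hnI, hnco⟩ := Finset.mem_filter.mp hnA
        obtain ⟨hn1, hnF⟩ := Finset.mem_Icc.mp hnI
        refine Finset.mem_filter.mpr ⟨Finset.mem_Icc.mpr ⟨?_, ?_⟩, ?_⟩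
        · exact (Nat.one_le_div_iff (by omega)).mpr (Nat.le_of_dvd (by omega) hdn)
        · exact (Nat.div_le_self n d).trans hnF
        · exact Nat.Coprime.coprime_dvd_left (Nat.div_dvd_of_dvd hdn) hnco
      calc ∑ n ∈ A.filter (fun n => d ∣ n), (1:ℝ)/n
          = ∑ n ∈ A.filter (fun n => d ∣ n), (1:ℝ)/d * (1/((n/d : ℕ):ℝ)) := by
            apply Finset.sum_congr rfl
            intro n hn
            have hdn : d ∣ n := (Finset.mem_filter.mp hn).2
            have hnI := (Finset.mem_filter.mp (Finset.mem_filter.mp hn).1).1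
            have hn1 : 1 ≤ n := (Finset.mem_Icc.mp hnI).1
            have hn0 : (0:ℝ) < (n:ℝ) := by exact_mod_cast hn1
            rw [Nat.cast_div hdn (by positivity : ((d:ℕ):ℝ) ≠ 0)]
            field_simp
        _ = ∑ m ∈ (A.filter (fun n => d ∣ n)).image (fun n => n/d),
              (1:ℝ)/d * (1/(m:ℝ)) :=
            (Finset.sum_image (f := fun m : ℕ => (1:ℝ)/d * (1/(m:ℝ))) hinj).symm
        _ ≤ ∑ m ∈ A, (1:ℝ)/d * (1/(m:ℝ)) :=
            Finset.sum_le_sum_of_subset_of_nonneg himg (fun m _ _ => by positivity)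
        _ = (1:ℝ)/d * Sx := by rw [hSx, Finset.mul_sum]
    · rw [if_neg hco, zero_mul]
      have hempty : A.filter (fun n => d ∣ n) = ∅ := by
        apply Finset.filter_false_of_mem
        intro n hn hdvd
        exact hco (Nat.Coprime.coprime_dvd_left hdvd (Finset.mem_filter.mp hn).2)
      rw [hempty]
      simp
  have hsum1 : ∑ d ∈ Finset.Icc 1 FN, ∑ n ∈ A.filter (fun n => d ∣ n), (1:ℝ)/n
      ≤ (∑ d ∈ (Finset.Icc 1 FN).filter (fun d => Nat.Coprime d q), (1:ℝ)/d) * Sx := by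
    calc ∑ d ∈ Finset.Icc 1 FN, ∑ n ∈ A.filter (fun n => d ∣ n), (1:ℝ)/n
        ≤ ∑ d ∈ Finset.Icc 1 FN, (if Nat.Coprime d q then (1:ℝ)/d else 0) * Sx :=
          Finset.sum_le_sum hc
      _ = (∑ d ∈ (Finset.Icc 1 FN).filter (fun d => Nat.Coprime d q), (1:ℝ)/d) * Sx := by
          rw [← Finset.sum_mul]
          congr 1
          exact (Finset.sum_filter _ _).symm
  have hDN : ∑ d ∈ (Finset.Icc 1 FN).filter (fun d => Nat.Coprime d q), (1:ℝ)/d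
      ≤ C₁ * ((q.totient:ℝ)/q) * Real.log N := hC₁ N hN q hq hqN
  have hSxb : Sx ≤ C₂ * ((q.totient:ℝ)/q) * Real.log x := hC₂ x hx q hq hqx1
  have hfin : (∑ d ∈ (Finset.Icc 1 FN).filter (fun d => Nat.Coprime d q), (1:ℝ)/d) * Sx
      ≤ (C₁ * ((q.totient:ℝ)/q) * Real.log N) * (C₂ * ((q.totient:ℝ)/q) * Real.log x) :=
    mul_le_mul hDN hSxb hSx0 (by positivity)
  have heq2 : (C₁ * ((q.totient:ℝ)/q) * Real.log N) * (C₂ * ((q.totient:ℝ)/q) * Real.log x)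
      = C₁ * C₂ * (q.totient : ℝ) ^ 2 * Real.log x * Real.log N / (q : ℝ) ^ 2 := by
    field_simp
  linarith [hsum1, hfin, heq2 ▸ hfin]
end

section
/- Let δ ∈ (0,1). There exists a constant C (depending only on δ) such that for all N ≥ 1, all positive integers q with q ≤ N^{1−δ}, and all integers r with gcd(r,q) = 1, ∑_{m ≡ r (mod q)} τ_N^*(m) ≤ C · N² φ(q) / q². -/
open Finset
open scoped Classical

lemma res_count (q M : ℕ) (S : Finset ℕ) (hS : S ⊆ Finset.Icc 1 M)
    (h : ∀ a ∈ S, ∀ b ∈ S, a % q = b % q) : S.card ≤ M / q + 1 := by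
  have := Finset.card_le_card_of_injOn (t := Finset.range (M / q + 1)) (fun a => a / q)
    (fun a ha => by
      simp only [Finset.mem_coe, Finset.mem_range, Nat.lt_succ_iff]
      exact Nat.div_le_div_right (Finset.mem_Icc.mp (hS ha)).2)
    (fun a ha b hb hab => by
      have h1 := Nat.div_add_mod a q
      have h2 := Nat.div_add_mod b q
      have hm := h a ha b hb
      have e1 : a / q = b / q := hab
      calc a = q * (a / q) + a % q := h1.symm
        _ = q * (b / q) + b % q := by rw [e1, hm]
        _ = b := h2)
  simpa using this

lemma coprime_count (q M : ℕ) (hq : 0 < q) :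
    ((Finset.Icc 1 M).filter (fun a => Nat.Coprime a q)).card ≤ (M / q + 1) * q.totient := by
  have hcard : (M / q + 1) * q.totient
      = ((Finset.range (M / q + 1)) ×ˢ ((Finset.range q).filter (fun a => q.Coprime a))).card := by
    rw [Finset.card_product, Finset.card_range, Nat.totient_eq_card_coprime]
  rw [hcard]
  apply Finset.card_le_card_of_injOn (fun a => (a / q, a % q))
  · intro a ha
    simp only [Finset.mem_coe, Finset.mem_filter, Finset.mem_Icc] at ha
    simp only [Finset.mem_coe, Finset.mem_product, Finset.mem_range, Finset.mem_filter, Nat.lt_succ_iff]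
    refine ⟨Nat.div_le_div_right ha.1.2, Nat.mod_lt _ hq, ?_⟩
    have : Nat.gcd q a = 1 := Nat.coprime_comm.mp ha.2
    have := Nat.gcd_rec q a
    unfold Nat.Coprime
    rw [Nat.gcd_comm]
    omega
  · intro a ha b hb hab
    have h1 := Nat.div_add_mod a q
    have h2 := Nat.div_add_mod b q
    simp only [Prod.mk.injEq] at hab
    calc a = q * (a / q) + a % q := h1.symm
      _ = q * (b / q) + b % q := by rw [hab.1, hab.2]
      _ = b := h2

/-- Let δ ∈ (0,1).  There is a constant C (depending only on δ) such that for all N ≥ 1,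
all q ≤ N^{1−δ} and all r with gcd(r,q) = 1,
∑_{m ≡ r (q)} τ_N^*(m) ≤ C·N²φ(q)/q². -/
theorem tau_star_bound_small_q (δ : ℝ) (hδ₀ : 0 < δ) (hδ₁ : δ < 1) :
    ∃ C : ℝ, ∀ N : ℝ, 1 ≤ N → ∀ q : ℕ, 0 < q → (q : ℝ) ≤ N ^ (1 - δ) →
      ∀ r : ℤ, Int.gcd r q = 1 →
      (∑ m ∈ (Finset.Icc 1 ⌊N * N⌋₊).filter
          (fun m : ℕ => (m : ZMod q) = (r : ZMod q)), (tauMN N N m : ℝ)) ≤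
        C * N ^ 2 * (q.totient : ℝ) / (q : ℝ) ^ 2 := by
  refine ⟨4, fun N hN q hq hqN r hr => ?_⟩
  haveI : NeZero q := ⟨hq.ne'⟩
  -- q ≤ N
  have hqleN : (q : ℝ) ≤ N := by
    calc (q : ℝ) ≤ N ^ (1 - δ) := hqN
      _ ≤ N ^ (1 : ℝ) := Real.rpow_le_rpow_of_exponent_le hN (by linarith)
      _ = N := Real.rpow_one N
  set M : ℕ := ⌊N⌋₊ with hM
  have hqM : q ≤ M := Nat.le_floor hqleN
  have hMN : (M : ℝ) ≤ N := Nat.floor_le (by linarith)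
  -- r is a unit mod q
  have hrunit : IsUnit ((r : ℤ) : ZMod q) := by
    have hco : IsCoprime (r : ℤ) (q : ℤ) := Int.isCoprime_iff_gcd_eq_one.mpr hr
    have := hco.map (Int.castRingHom (ZMod q))
    simp only [map_intCast, map_natCast, ZMod.natCast_self] at this
    exact isCoprime_zero_right.mp this
  -- the sets
  set S : Finset ℕ := (Finset.Icc 1 ⌊N * N⌋₊).filter
      (fun m : ℕ => (m : ZMod q) = (r : ZMod q)) with hS
  set T : Finset (ℕ × ℕ) := ((Finset.Icc 1 M) ×ˢ (Finset.Icc 1 M)).filter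
      (fun p => ((p.1 * p.2 : ℕ) : ZMod q) = (r : ZMod q)) with hT
  -- Step 1: sum = card of sigma ≤ T.card
  have step1 : ∑ m ∈ S, tauMN N N m ≤ T.card := by
    rw [show ∑ m ∈ S, tauMN N N m
        = (S.sigma (fun m => m.divisors.filter
            (fun a : ℕ => (a : ℝ) ≤ N ∧ ((m / a : ℕ) : ℝ) ≤ N))).card from
      (Finset.card_sigma _ _).symm]
    apply Finset.card_le_card_of_injOn (fun p => (p.2, p.1 / p.2))
    · rintro ⟨m, a⟩ hp
      simp only [Finset.mem_coe, Finset.mem_sigma, hS, Finset.mem_filter, Finset.mem_Icc,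
        Nat.mem_divisors] at hp
      obtain ⟨⟨⟨hm1, hm2⟩, hmr⟩, ⟨ha, hm0⟩, haN, hmaN⟩ := hp
      have ha1 : 1 ≤ a := Nat.pos_of_ne_zero (fun h => by subst h; simp at ha; omega)
      have hma1 : 1 ≤ m / a := Nat.div_pos (Nat.le_of_dvd (by omega) ha) ha1
      simp only [Finset.mem_coe, hT, Finset.mem_filter, Finset.mem_product, Finset.mem_Icc]
      refine ⟨⟨⟨ha1, Nat.le_floor haN⟩, ⟨hma1, Nat.le_floor hmaN⟩⟩, ?_⟩
      rw [Nat.mul_div_cancel' ha]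
      exact hmr
    · rintro ⟨m, a⟩ hp ⟨m', a'⟩ hp' hee
      simp only [Prod.mk.injEq] at hee
      obtain ⟨e1, e2⟩ := hee
      simp only [Finset.mem_coe, Finset.mem_sigma, hS, Finset.mem_filter,
        Nat.mem_divisors] at hp hp'
      have hm : m = a * (m / a) := (Nat.mul_div_cancel' hp.2.1.1).symm
      have hm' : m' = a' * (m' / a') := (Nat.mul_div_cancel' hp'.2.1.1).symm
      have : m = m' := by rw [hm, hm', e2, e1]
      subst this
      simp [e1]
  -- Step 2: T.card ≤ (M/q+1)^2 * totient
  set A : Finset ℕ := (Finset.Icc 1 M).filter (fun a => Nat.Coprime a q) with hA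
  set B : ℕ → Finset ℕ := fun a => (Finset.Icc 1 M).filter
      (fun b => ((a * b : ℕ) : ZMod q) = (r : ZMod q)) with hB
  have step2 : T.card ≤ (M / q + 1) * ((M / q + 1) * q.totient) := by
    have hsub : T ⊆ A.biUnion (fun a => {a} ×ˢ B a) := by
      intro p hp
      simp only [hT, Finset.mem_filter, Finset.mem_product, Finset.mem_Icc] at hp
      obtain ⟨⟨hp1, hp2⟩, hpr⟩ := hp
      have hu : IsUnit ((p.1 : ℕ) : ZMod q) := by
        apply isUnit_of_mul_isUnit_left (y := ((p.2 : ℕ) : ZMod q))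
        rw [← Nat.cast_mul, hpr]; exact hrunit
      have hco : Nat.Coprime p.1 q := (ZMod.isUnit_iff_coprime p.1 q).mp hu
      rw [Finset.mem_biUnion]
      refine ⟨p.1, Finset.mem_filter.mpr ⟨Finset.mem_Icc.mpr hp1, hco⟩, ?_⟩
      refine Finset.mem_product.mpr ⟨Finset.mem_singleton_self _, ?_⟩
      exact Finset.mem_filter.mpr ⟨Finset.mem_Icc.mpr hp2, hpr⟩
    calc T.card ≤ ∑ a ∈ A, ({a} ×ˢ B a).card :=
          le_trans (Finset.card_le_card hsub) (Finset.card_biUnion_le)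
      _ ≤ ∑ a ∈ A, (M / q + 1) := by
          apply Finset.sum_le_sum
          intro a ha
          rw [Finset.singleton_product, Finset.card_map]
          simp only [hA, Finset.mem_filter] at ha
          have hau : IsUnit ((a : ℕ) : ZMod q) := (ZMod.isUnit_iff_coprime a q).mpr ha.2
          apply res_count q M _ (Finset.filter_subset _ _)
          intro b hb b' hb'
          simp only [hB, Finset.mem_filter] at hb hb'
          have : ((b : ℕ) : ZMod q) = ((b' : ℕ) : ZMod q) := by
            apply hau.mul_left_cancel
            rw [← Nat.cast_mul, ← Nat.cast_mul, hb.2, hb'.2]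
          exact (ZMod.natCast_eq_natCast_iff' b b' q).mp this
      _ = A.card * (M / q + 1) := by rw [Finset.sum_const, smul_eq_mul]
      _ ≤ ((M / q + 1) * q.totient) * (M / q + 1) :=
          Nat.mul_le_mul_right _ (coprime_count q M hq)
      _ = (M / q + 1) * ((M / q + 1) * q.totient) := by ring
  -- Step 3: real arithmetic
  have hq' : (0 : ℝ) < q := Nat.cast_pos.mpr hq
  have hNpos : (0 : ℝ) < N := by linarith
  have hkey : ((M / q + 1 : ℕ) : ℝ) ≤ 2 * N / q := by
    push_cast
    have h1 : ((M / q : ℕ) : ℝ) ≤ (M : ℝ) / q := Nat.cast_div_le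
    have h2 : (M : ℝ) / q ≤ N / q := by gcongr
    have h3 : (1 : ℝ) ≤ N / q := (one_le_div hq').mpr hqleN
    calc ((M / q : ℕ) : ℝ) + 1 ≤ N / q + N / q := by
          push_cast at h1 ⊢
          linarith [le_trans h1 h2]
      _ = 2 * N / q := by ring
  calc (∑ m ∈ S, (tauMN N N m : ℝ))
      = ((∑ m ∈ S, tauMN N N m : ℕ) : ℝ) := by push_cast; rfl
    _ ≤ ((M / q + 1) * ((M / q + 1) * q.totient) : ℕ) := by
        exact_mod_cast Nat.cast_le.mpr (le_trans step1 step2)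
    _ ≤ (2 * N / q) * ((2 * N / q) * q.totient) := by
        push_cast
        have ht : (0 : ℝ) ≤ (q.totient : ℝ) := Nat.cast_nonneg _
        have hx : (0 : ℝ) ≤ ((M / q : ℕ) : ℝ) + 1 := by positivity
        have hy : (0 : ℝ) ≤ 2 * N / q := by positivity
        push_cast at hkey
        have inner : (((M / q : ℕ) : ℝ) + 1) * q.totient ≤ (2 * N / q) * q.totient :=
          mul_le_mul_of_nonneg_right hkey ht
        exact mul_le_mul hkey inner (mul_nonneg hx ht) hy
    _ = 4 * N ^ 2 * (q.totient : ℝ) / (q : ℝ) ^ 2 := by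
        field_simp
        ring
end
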